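/- arXiv:2208.13860 — 5 statements merged into one kernel-verified Lean document; each statement's English description precedes it below -/
import Mathlib

section
/- Let φ₁ ∈ ℂ^N with all entries nonzero and suppose there exist δ̄ ∈ [0, π/2) and γ̄ ∈ (0,1) such that |arg φ₁ₖ − arg φ₁ₗ| ≤ δ̄ and | |φ₁ₖ|/|φ₁ₗ| − 1 | ≤ γ̄ for all k,l. Then (1/(N Σ_k |φ₁ₖ|²)) · [Σ_k |φ₁ₖ|² + 2 Σ_{k>l} |φ₁ₖ||φ₁ₗ| cos(arg φ₁ₖ − arg φ₁ₗ)] ≥ (min_k |φ₁ₖ|² / max_k |φ₁ₖ|²) · (1 + cos δ̄)/2 ≥ (1 − γ̄)² (1 + cos δ̄)/2. -/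
open Finset

lemma double_sum_split' {N : ℕ} (f : Fin N → Fin N → ℝ)
    (hf : ∀ k l, f k l = f l k) :
    ∑ k, ∑ l, f k l =
      (∑ k, f k k) + 2 * ∑ k, ∑ l ∈ Finset.univ.filter (fun l => l < k), f k l := by
  have hA : ∑ k, ∑ l ∈ Finset.univ.filter (fun l => l < k), f k l
      = ∑ k : Fin N, ∑ l : Fin N, if l < k then f k l else 0 := by
    simp [Finset.sum_filter]
  have hB : (∑ k : Fin N, ∑ l : Fin N, if k < l then f k l else (0:ℝ))
      = ∑ k : Fin N, ∑ l : Fin N, if l < k then f k l else 0 := by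
    rw [Finset.sum_comm]
    refine Finset.sum_congr rfl fun k _ => Finset.sum_congr rfl fun l _ => ?_
    simp [hf k l]
  have hpt : ∀ k l : Fin N, f k l =
      (if l < k then f k l else 0) + (if l = k then f k l else 0) +
      (if k < l then f k l else 0) := by
    intro k l
    rcases lt_trichotomy l k with h | h | h
    · simp [h, h.ne, h.asymm]
    · simp [h]
    · simp [h, h.ne', h.asymm]
  calc ∑ k, ∑ l, f k l
      = ∑ k : Fin N, ∑ l : Fin N, ((if l < k then f k l else 0)
          + (if l = k then f k l else 0) + (if k < l then f k l else 0)) := by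
        exact Finset.sum_congr rfl fun k _ => Finset.sum_congr rfl fun l _ => hpt k l
    _ = (∑ k : Fin N, ∑ l : Fin N, if l < k then f k l else 0)
        + (∑ k : Fin N, ∑ l : Fin N, if l = k then f k l else 0)
        + (∑ k : Fin N, ∑ l : Fin N, if k < l then f k l else 0) := by
        simp [Finset.sum_add_distrib]
    _ = (∑ k, f k k) + 2 * ∑ k, ∑ l ∈ Finset.univ.filter (fun l => l < k), f k l := by
        rw [hB, hA]
        have hd : ∀ k : Fin N, (∑ l : Fin N, if l = k then f k l else 0) = f k k := by
          intro k; simp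
        rw [Finset.sum_congr rfl fun k _ => hd k]
        ring

lemma coherence_aux {N : ℕ} (hN : 0 < N) (hne : (Finset.univ : Finset (Fin N)).Nonempty)
    (a θ : Fin N → ℝ) (hapos : ∀ k, 0 < a k)
    (δb : ℝ) (hδ0 : 0 ≤ δb) (hδπ : δb < Real.pi / 2)
    (harg : ∀ k l, |θ k - θ l| ≤ δb) :
    ((∑ k, a k ^ 2) +
        2 * ∑ k, ∑ l ∈ Finset.univ.filter (fun l => l < k),
          a k * a l * Real.cos (θ k - θ l)) / ((N : ℝ) * ∑ k, a k ^ 2)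
      ≥ (Finset.univ.inf' hne (fun k => a k ^ 2) /
         Finset.univ.sup' hne (fun k => a k ^ 2)) * (1 + Real.cos δb) / 2 := by
  have hπ := Real.pi_pos
  set mI := Finset.univ.inf' hne (fun k => a k ^ 2) with hmI
  set M := Finset.univ.sup' hne (fun k => a k ^ 2) with hM
  obtain ⟨k₀, -, hk₀⟩ := Finset.exists_mem_eq_inf' hne (fun k => a k ^ 2)
  obtain ⟨l₀, -, hl₀⟩ := Finset.exists_mem_eq_sup' hne (fun k => a k ^ 2)
  have hmIpos : 0 < mI := by rw [← hmI] at hk₀; rw [hk₀]; exact pow_pos (hapos k₀) 2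
  have hMpos : 0 < M := by rw [← hM] at hl₀; rw [hl₀]; exact pow_pos (hapos l₀) 2
  set c := (Finset.univ.inf' hne θ + Finset.univ.sup' hne θ) / 2 with hc
  have hrange : Finset.univ.sup' hne θ - Finset.univ.inf' hne θ ≤ δb := by
    obtain ⟨k₁, -, hk₁⟩ := Finset.exists_mem_eq_sup' hne θ
    obtain ⟨l₁, -, hl₁⟩ := Finset.exists_mem_eq_inf' hne θ
    rw [hk₁, hl₁]
    exact (le_abs_self _).trans (harg k₁ l₁)
  have hψ : ∀ k, |θ k - c| ≤ δb / 2 := by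
    intro k
    have h1 : Finset.univ.inf' hne θ ≤ θ k := Finset.inf'_le _ (Finset.mem_univ k)
    have h2 : θ k ≤ Finset.univ.sup' hne θ := Finset.le_sup' _ (Finset.mem_univ k)
    rw [abs_le]
    constructor <;> [linarith [hc]; linarith [hc]]
  have hcos2pos : 0 < Real.cos (δb / 2) :=
    Real.cos_pos_of_mem_Ioo ⟨by linarith, by linarith⟩
  have hcosψ : ∀ k, Real.cos (δb / 2) ≤ Real.cos (θ k - c) := by
    intro k
    rw [← Real.cos_abs (θ k - c)]
    exact Real.cos_le_cos_of_nonneg_of_le_pi (abs_nonneg _) (by linarith) (hψ k)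
  have hsqrt : ∀ k, Real.sqrt mI ≤ a k := by
    intro k
    have h : mI ≤ a k ^ 2 := by rw [hmI]; exact Finset.inf'_le _ (Finset.mem_univ k)
    calc Real.sqrt mI ≤ Real.sqrt (a k ^ 2) := Real.sqrt_le_sqrt h
      _ = a k := Real.sqrt_sq (hapos k).le
  set C := ∑ k, a k * Real.cos (θ k - c) with hC
  have hCge : (N : ℝ) * (Real.sqrt mI * Real.cos (δb / 2)) ≤ C := by
    rw [hC]
    calc (N : ℝ) * (Real.sqrt mI * Real.cos (δb / 2))
        = ∑ _k : Fin N, Real.sqrt mI * Real.cos (δb / 2) := by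
          rw [Finset.sum_const, Finset.card_univ, Fintype.card_fin, nsmul_eq_mul]
      _ ≤ ∑ k, a k * Real.cos (θ k - c) := by
          refine Finset.sum_le_sum fun k _ => ?_
          exact mul_le_mul (hsqrt k) (hcosψ k) hcos2pos.le (hapos k).le
  have hCnn : 0 ≤ C := le_trans (by positivity) hCge
  have hsym : ∀ k l : Fin N,
      (fun k l => a k * a l * Real.cos (θ k - θ l)) k l
        = (fun k l => a k * a l * Real.cos (θ k - θ l)) l k := by
    intro k l
    simp only
    rw [show θ l - θ k = -(θ k - θ l) by ring, Real.cos_neg]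
    ring
  have hsplit := double_sum_split' (fun k l => a k * a l * Real.cos (θ k - θ l)) hsym
  have hexp : (∑ k : Fin N, ∑ l : Fin N, a k * a l * Real.cos (θ k - θ l))
      = C ^ 2 + (∑ k, a k * Real.sin (θ k - c)) ^ 2 := by
    rw [hC, pow_two, pow_two, Finset.sum_mul_sum, Finset.sum_mul_sum,
      ← Finset.sum_add_distrib]
    refine Finset.sum_congr rfl fun k _ => ?_
    rw [← Finset.sum_add_distrib]
    refine Finset.sum_congr rfl fun l _ => ?_
    rw [show θ k - θ l = (θ k - c) - (θ l - c) by ring, Real.cos_sub]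
    ring
  have hdiag : (∑ k : Fin N, a k * a k * Real.cos (θ k - θ k)) = ∑ k, a k ^ 2 := by
    refine Finset.sum_congr rfl fun k _ => ?_
    rw [sub_self, Real.cos_zero]
    ring
  have hnum : (∑ k, a k ^ 2) +
      2 * (∑ k, ∑ l ∈ Finset.univ.filter (fun l => l < k),
        a k * a l * Real.cos (θ k - θ l))
      = C ^ 2 + (∑ k, a k * Real.sin (θ k - c)) ^ 2 := by
    rw [← hdiag, ← hsplit, hexp]
  have hlow : (N : ℝ) ^ 2 * mI * Real.cos (δb / 2) ^ 2
      ≤ (∑ k, a k ^ 2) +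
        2 * (∑ k, ∑ l ∈ Finset.univ.filter (fun l => l < k),
          a k * a l * Real.cos (θ k - θ l)) := by
    rw [hnum]
    have h1 : ((N : ℝ) * (Real.sqrt mI * Real.cos (δb / 2))) ^ 2 ≤ C ^ 2 :=
      pow_le_pow_left₀ (by positivity) hCge 2
    have h2 : (N : ℝ) ^ 2 * mI * Real.cos (δb / 2) ^ 2
        = ((N : ℝ) * (Real.sqrt mI * Real.cos (δb / 2))) ^ 2 := by
      rw [mul_pow, mul_pow, Real.sq_sqrt hmIpos.le]
      ring
    calc (N : ℝ) ^ 2 * mI * Real.cos (δb / 2) ^ 2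
        = ((N : ℝ) * (Real.sqrt mI * Real.cos (δb / 2))) ^ 2 := h2
      _ ≤ C ^ 2 := h1
      _ ≤ C ^ 2 + (∑ k, a k * Real.sin (θ k - c)) ^ 2 :=
        le_add_of_nonneg_right (sq_nonneg _)
  have hNpos : (0 : ℝ) < N := by exact_mod_cast hN
  have hden_pos : 0 < (N : ℝ) * ∑ k, a k ^ 2 := by
    have hs : 0 < ∑ k, a k ^ 2 :=
      Finset.sum_pos (fun k _ => pow_pos (hapos k) 2) hne
    positivity
  have hden_le : (N : ℝ) * ∑ k, a k ^ 2 ≤ (N : ℝ) ^ 2 * M := by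
    have hs : ∑ k, a k ^ 2 ≤ (N : ℝ) * M := by
      calc ∑ k, a k ^ 2 ≤ ∑ _k : Fin N, M :=
            Finset.sum_le_sum fun k _ => by
              rw [hM]; exact Finset.le_sup' (fun k => a k ^ 2) (Finset.mem_univ k)
        _ = (N : ℝ) * M := by
            rw [Finset.sum_const, Finset.card_univ, Fintype.card_fin, nsmul_eq_mul]
    nlinarith
  have hnumnn : 0 ≤ (∑ k, a k ^ 2) +
      2 * (∑ k, ∑ l ∈ Finset.univ.filter (fun l => l < k),
        a k * a l * Real.cos (θ k - θ l)) := by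
    refine le_trans ?_ hlow
    have : 0 ≤ (N : ℝ) ^ 2 * mI := by positivity
    positivity
  rw [ge_iff_le]
  have hfinal : mI / M * (1 + Real.cos δb) / 2
      = (N : ℝ) ^ 2 * mI * Real.cos (δb / 2) ^ 2 / ((N : ℝ) ^ 2 * M) := by
    have hcsq : Real.cos (δb / 2) ^ 2 = 1 / 2 + Real.cos δb / 2 := by
      rw [Real.cos_sq]
      ring_nf
    rw [hcsq]
    field_simp
  rw [hfinal]
  exact div_le_div₀ hnumnn hlow hden_pos hden_le

/-- Quantitative lower bound on the normalized coherence of an eigenvector whose entries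
have pairwise phase differences at most `δ̄ ∈ [0, π/2)` and amplitude-ratio deviations at
most `γ̄ ∈ (0,1)`: the coherence is at least `(min|φ|²/max|φ|²)(1+cos δ̄)/2 ≥
(1−γ̄)²(1+cos δ̄)/2`. -/
theorem eigenvector_coherence_lower_bound {N : ℕ} (hN : 0 < N)
    (φ₁ : Fin N → ℂ) (hφ : ∀ k, φ₁ k ≠ 0)
    (δb γb : ℝ) (hδ : δb ∈ Set.Ico 0 (Real.pi / 2)) (hγ : γb ∈ Set.Ioo 0 1)
    (harg : ∀ k l, |Complex.arg (φ₁ k) - Complex.arg (φ₁ l)| ≤ δb)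
    (hamp : ∀ k l, |‖φ₁ k‖ / ‖φ₁ l‖ - 1| ≤ γb) :
    ((∑ k, ‖φ₁ k‖ ^ 2) +
        2 * ∑ k, ∑ l ∈ Finset.univ.filter (fun l => l < k),
          ‖φ₁ k‖ * ‖φ₁ l‖ *
            Real.cos (Complex.arg (φ₁ k) - Complex.arg (φ₁ l))) /
      ((N : ℝ) * ∑ k, ‖φ₁ k‖ ^ 2)
      ≥ ((Finset.univ.inf' (Finset.univ_nonempty_iff.mpr ⟨⟨0, hN⟩⟩)
            fun k => ‖φ₁ k‖ ^ 2) /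
          (Finset.univ.sup' (Finset.univ_nonempty_iff.mpr ⟨⟨0, hN⟩⟩)
            fun k => ‖φ₁ k‖ ^ 2)) * (1 + Real.cos δb) / 2 ∧
    ((Finset.univ.inf' (Finset.univ_nonempty_iff.mpr ⟨⟨0, hN⟩⟩)
          fun k => ‖φ₁ k‖ ^ 2) /
        (Finset.univ.sup' (Finset.univ_nonempty_iff.mpr ⟨⟨0, hN⟩⟩)
          fun k => ‖φ₁ k‖ ^ 2)) * (1 + Real.cos δb) / 2
      ≥ (1 - γb) ^ 2 * (1 + Real.cos δb) / 2 := by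
  obtain ⟨hδ0, hδπ⟩ := hδ
  obtain ⟨hγ0, hγ1⟩ := hγ
  have hne : (Finset.univ : Finset (Fin N)).Nonempty :=
    Finset.univ_nonempty_iff.mpr ⟨⟨0, hN⟩⟩
  constructor
  · exact coherence_aux hN (Finset.univ_nonempty_iff.mpr ⟨⟨0, hN⟩⟩)
      (fun k => ‖φ₁ k‖) (fun k => Complex.arg (φ₁ k))
      (fun k => norm_pos_iff.mpr (hφ k)) δb hδ0 hδπ harg
  · have hcosδ : 0 < Real.cos δb :=
      Real.cos_pos_of_mem_Ioo ⟨by linarith [Real.pi_pos], hδπ⟩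
    obtain ⟨k₀, -, hk₀⟩ := Finset.exists_mem_eq_inf'
      (Finset.univ_nonempty_iff.mpr ⟨⟨0, hN⟩⟩ :
        (Finset.univ : Finset (Fin N)).Nonempty)
      (fun k => ‖φ₁ k‖ ^ 2)
    obtain ⟨l₀, -, hl₀⟩ := Finset.exists_mem_eq_sup'
      (Finset.univ_nonempty_iff.mpr ⟨⟨0, hN⟩⟩ :
        (Finset.univ : Finset (Fin N)).Nonempty)
      (fun k => ‖φ₁ k‖ ^ 2)
    rw [hk₀, hl₀]
    have hratio : 1 - γb ≤ ‖φ₁ k₀‖ / ‖φ₁ l₀‖ := by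
      have h := abs_le.mp (hamp k₀ l₀)
      linarith [h.1]
    have hkey : (1 - γb) ^ 2 ≤ ‖φ₁ k₀‖ ^ 2 / ‖φ₁ l₀‖ ^ 2 := by
      rw [← div_pow]
      exact pow_le_pow_left₀ (by linarith) hratio 2
    have h1c : (0 : ℝ) ≤ 1 + Real.cos δb := by linarith
    have hmul := mul_le_mul_of_nonneg_right hkey h1c
    rw [ge_iff_le]
    linarith
end

section
/- Under the setting: A = ϖ₀I + ηe^{jφ}(diag(ς̄*) − Y), P the projector off span(φ₁), M := Re(e^{jφ}Y) a Laplacian with λ₂(M) > 0, and the parametric bound max_k Re(e^{jφ} ς̄*_k) < c·λ₂(M) where c := (1−γ̄)²(1+cos δ̄)/2 and the eigenvector bounds of Condition 2 hold, one has for V(v) = ½ vᴴPv along v̇ = Av: V̇(v) = η vᴴP[Re(e^{jφ}diag(ς̄*)) − M]Pv ≤ η‖Pv‖²(max_k Re(e^{jφ}ς̄*_k) − c λ₂(M)) < 0 for all v ∉ span(φ₁). -/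
open Matrix Finset Complex


set_option maxHeartbeats 1000000 in
lemma coherence_bound {N : ℕ} (hN : 0 < N) (φ₁ : Fin N → ℂ) (hφ : ∀ k, φ₁ k ≠ 0)
    (δb γb : ℝ) (hδ : δb ∈ Set.Ico 0 (Real.pi / 2)) (hγ : γb ∈ Set.Ioo 0 1)
    (harg : ∀ k l, |Complex.arg (φ₁ k) - Complex.arg (φ₁ l)| ≤ δb)
    (hamp : ∀ k l, |‖φ₁ k‖ / ‖φ₁ l‖ - 1| ≤ γb) :
    (1 - γb) ^ 2 * ((1 + Real.cos δb) / 2) * N * (∑ k, ‖φ₁ k‖ ^ 2)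
      ≤ ‖∑ k, φ₁ k‖ ^ 2 := by
  obtain ⟨hδ0, hδ1⟩ := hδ
  obtain ⟨hγ0, hγ1⟩ := hγ
  have hpi := Real.pi_pos
  have hne : (univ : Finset (Fin N)).Nonempty := ⟨⟨0, hN⟩, mem_univ _⟩
  set θ : Fin N → ℝ := fun k => (φ₁ k).arg with hθ
  set a : Fin N → ℝ := fun k => ‖φ₁ k‖ with ha
  have hapos : ∀ k, 0 < a k := fun k => norm_pos_iff.mpr (hφ k)
  set θmax := univ.sup' hne θ with hθmax
  set θmin := univ.inf' hne θ with hθmin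
  set ψ := (θmin + θmax) / 2 with hψ
  have hψdef : ψ = (θmin + θmax) / 2 := rfl
  obtain ⟨kM, -, hkM⟩ := Finset.exists_mem_eq_sup' hne θ
  obtain ⟨km, -, hkm⟩ := Finset.exists_mem_eq_inf' hne θ
  have e1 : θmax = θ kM := by rw [hθmax, hkM]
  have e2 : θmin = θ km := by rw [hθmin, hkm]
  have hspread : θmax - θmin ≤ δb := by
    have h1 := abs_le.1 (harg kM km)
    rw [e1, e2]; exact h1.2
  have habs : ∀ k, |θ k - ψ| ≤ δb / 2 := by
    intro k
    have h1 : θ k ≤ θmax := Finset.le_sup' θ (mem_univ k)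
    have h2 : θmin ≤ θ k := Finset.inf'_le θ (mem_univ k)
    rw [abs_le]; constructor <;> linarith [hψdef]
  have hcosb : ∀ k, Real.cos (δb / 2) ≤ Real.cos (θ k - ψ) := by
    intro k
    rw [← Real.cos_abs (θ k - ψ)]
    exact Real.cos_le_cos_of_nonneg_of_le_pi (abs_nonneg _) (by linarith) (habs k)
  set C := Real.cos (δb / 2) with hC
  have hCpos : 0 ≤ C := Real.cos_nonneg_of_mem_Icc ⟨by linarith, by linarith⟩
  have hre : ∀ k, (Complex.exp (-(ψ : ℂ) * Complex.I) * φ₁ k).re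
      = a k * Real.cos (θ k - ψ) := by
    intro k
    conv_lhs => rw [← Complex.norm_mul_exp_arg_mul_I (φ₁ k)]
    rw [mul_comm ((‖φ₁ k‖ : ℂ)) _, ← mul_assoc, ← Complex.exp_add]
    have h3 : -(ψ : ℂ) * Complex.I + (φ₁ k).arg * Complex.I
        = ((θ k - ψ : ℝ) : ℂ) * Complex.I := by push_cast; ring
    rw [h3, mul_comm, Complex.re_ofReal_mul, Complex.exp_ofReal_mul_I_re, mul_comm]
  set S := ∑ k, a k with hS
  have hSpos : 0 < S := Finset.sum_pos (fun k _ => hapos k) hne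
  have hkey1 : C * S ≤ (Complex.exp (-(ψ : ℂ) * Complex.I) * ∑ k, φ₁ k).re := by
    conv_rhs => rw [Finset.mul_sum, Complex.re_sum]
    rw [hS, Finset.mul_sum]
    apply Finset.sum_le_sum
    intro k _
    rw [hre k, mul_comm]
    exact mul_le_mul_of_nonneg_left (hcosb k) (hapos k).le
  have hkey2 : (Complex.exp (-(ψ : ℂ) * Complex.I) * ∑ k, φ₁ k).re
      ≤ ‖∑ k, φ₁ k‖ := by
    calc (Complex.exp (-(ψ : ℂ) * Complex.I) * ∑ k, φ₁ k).re
        ≤ ‖Complex.exp (-(ψ : ℂ) * Complex.I) * ∑ k, φ₁ k‖ := Complex.re_le_norm _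
      _ = ‖∑ k, φ₁ k‖ := by
          rw [norm_mul]
          have h4 : -(ψ : ℂ) * Complex.I = ((-ψ : ℝ) : ℂ) * Complex.I := by push_cast; ring
          rw [h4, Complex.norm_exp_ofReal_mul_I, one_mul]
  obtain ⟨l, -, hl⟩ := Finset.exists_mem_eq_sup' hne a
  have hal : ∀ k, a k ≤ a l := fun k => hl ▸ Finset.le_sup' a (mem_univ k)
  have hlo : ∀ k, (1 - γb) * a l ≤ a k := by
    intro k
    have h1 := (abs_le.1 (hamp k l)).1
    have h2 : (1 - γb) ≤ a k / a l := by
      have : a k / a l - 1 = ‖φ₁ k‖ / ‖φ₁ l‖ - 1 := rfl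
      linarith [this ▸ h1]
    exact (le_div_iff₀ (hapos l)).1 h2
  have hS1 : (N : ℝ) * ((1 - γb) * a l) ≤ S := by
    have h5 := Finset.card_nsmul_le_sum univ a ((1 - γb) * a l) (fun k _ => hlo k)
    simpa [Finset.card_univ, nsmul_eq_mul] using h5
  have hS2 : (∑ k, a k ^ 2) ≤ a l * S := by
    rw [hS, Finset.mul_sum]
    apply Finset.sum_le_sum
    intro k _
    nlinarith [hal k, (hapos k).le]
  have hhalf : (1 + Real.cos δb) / 2 = C ^ 2 := by
    rw [hC, Real.cos_sq, show 2 * (δb / 2) = δb by ring]; ring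
  have h1 : C * S ≤ ‖∑ k, φ₁ k‖ := le_trans hkey1 hkey2
  have h2 : (C * S) ^ 2 ≤ ‖∑ k, φ₁ k‖ ^ 2 :=
    pow_le_pow_left₀ (mul_nonneg hCpos hSpos.le) h1 2
  have hg1 : (0:ℝ) < 1 - γb := by linarith
  have h3 : (1 - γb) ^ 2 * C ^ 2 * N * (∑ k, a k ^ 2) ≤ (C * S) ^ 2 := by
    calc (1 - γb) ^ 2 * C ^ 2 * N * (∑ k, a k ^ 2)
        ≤ (1 - γb) ^ 2 * C ^ 2 * N * (a l * S) := by
          apply mul_le_mul_of_nonneg_left hS2 (by positivity)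
      _ = ((1 - γb) * (C ^ 2 * S)) * ((N : ℝ) * ((1 - γb) * a l)) := by ring
      _ ≤ ((1 - γb) * (C ^ 2 * S)) * S := by
          apply mul_le_mul_of_nonneg_left hS1 (mul_nonneg hg1.le (mul_nonneg (sq_nonneg C) hSpos.le))
      _ ≤ (1 * (C ^ 2 * S)) * S := by
          apply mul_le_mul_of_nonneg_right _ hSpos.le
          apply mul_le_mul_of_nonneg_right (by linarith) (mul_nonneg (sq_nonneg C) hSpos.le)
      _ = (C * S) ^ 2 := by ring
  rw [hhalf]
  exact h3.trans h2


lemma cs_complex_sum {N : ℕ} (g u : Fin N → ℂ) :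
    ‖∑ k, (starRingEnd ℂ) (g k) * u k‖ ^ 2
      ≤ (∑ k, ‖g k‖ ^ 2) * (∑ k, ‖u k‖ ^ 2) := by
  have h1 : ‖∑ k, (starRingEnd ℂ) (g k) * u k‖
      ≤ ∑ k, ‖g k‖ * ‖u k‖ := by
    calc ‖∑ k, (starRingEnd ℂ) (g k) * u k‖
        ≤ ∑ k, ‖(starRingEnd ℂ) (g k) * u k‖ :=
          norm_sum_le _ _
      _ = ∑ k, ‖g k‖ * ‖u k‖ := by
          apply Finset.sum_congr rfl; intro k _
          rw [norm_mul, Complex.norm_conj]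
  calc ‖∑ k, (starRingEnd ℂ) (g k) * u k‖ ^ 2
      ≤ (∑ k, ‖g k‖ * ‖u k‖) ^ 2 := by
        apply pow_le_pow_left₀ (norm_nonneg _) h1
    _ ≤ _ := Finset.sum_mul_sq_le_sq_mul_sq _ _ _

lemma laplacian_quad_bound {N : ℕ} (hN : 0 < N)
    (M : Matrix (Fin N) (Fin N) ℝ)
    (hMsymm : ∀ i j, M i j = M j i)
    (hMrow : ∀ i, (∑ j, M i j) = 0)
    (lam2 : ℝ)
    (hlam2 : ∀ w : Fin N → ℂ, (∑ k, w k) = 0 →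
      lam2 * (∑ k, ‖w k‖ ^ 2)
        ≤ (star w ⬝ᵥ (M.map Complex.ofReal).mulVec w).re)
    (hlam2pos : 0 < lam2)
    (c : ℝ) (hc0 : 0 ≤ c)
    (u : Fin N → ℂ)
    (hT : ‖∑ k, u k‖ ^ 2
        ≤ (1 - c) * N * (∑ k, ‖u k‖ ^ 2)) :
    c * lam2 * (∑ k, ‖u k‖ ^ 2)
      ≤ (star u ⬝ᵥ (M.map Complex.ofReal).mulVec u).re := by
  set s := ∑ k, ‖u k‖ ^ 2 with hs
  have hsnn : 0 ≤ s := Finset.sum_nonneg fun k _ => sq_nonneg _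
  have hNR : (0:ℝ) < N := by exact_mod_cast hN
  have hNC : (N : ℂ) ≠ 0 := by exact_mod_cast hN.ne'
  set T := ∑ k, u k with hTdef
  set α : ℂ := T / N with hα
  set w : Fin N → ℂ := fun k => u k - α with hw
  have hsumconst : (∑ _k : Fin N, α) = (N : ℂ) * α := by
    rw [Finset.sum_const, Finset.card_univ, Fintype.card_fin, nsmul_eq_mul]
  have hNα : (N : ℂ) * α = T := by
    rw [hα, mul_div_cancel₀ _ hNC]
  have hsumw0 : (∑ k, w k) = 0 := by
    simp only [hw]
    rw [Finset.sum_sub_distrib, hsumconst, hNα, ← hTdef, sub_self]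
  -- row sums of complex M
  have hrowC : ∀ i, (∑ j, ((M i j : ℝ) : ℂ)) = 0 := by
    intro i
    rw [← Complex.ofReal_sum, hMrow i, Complex.ofReal_zero]
  have hcolC : ∀ j, (∑ i, ((M i j : ℝ) : ℂ)) = 0 := by
    intro j
    calc (∑ i, ((M i j : ℝ) : ℂ)) = ∑ i, ((M j i : ℝ) : ℂ) := by
          apply Finset.sum_congr rfl; intro i _; rw [hMsymm i j]
      _ = 0 := hrowC j
  have hMV : (M.map Complex.ofReal).mulVec u = (M.map Complex.ofReal).mulVec w := by
    funext i
    simp only [Matrix.mulVec, dotProduct, Matrix.map_apply]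
    calc (∑ j, (M i j : ℂ) * u j) = ∑ j, ((M i j : ℂ) * w j + (M i j : ℂ) * α) := by
          apply Finset.sum_congr rfl; intro j _; simp only [hw]; ring
      _ = (∑ j, (M i j : ℂ) * w j) + (∑ j, ((M i j : ℝ) : ℂ)) * α := by
          rw [Finset.sum_add_distrib, Finset.sum_mul]
      _ = ∑ j, (M i j : ℂ) * w j := by rw [hrowC i]; ring
  have hquad : star u ⬝ᵥ (M.map Complex.ofReal).mulVec u
      = star w ⬝ᵥ (M.map Complex.ofReal).mulVec w := by
    rw [hMV]
    have hsum0 : (∑ i, ((M.map Complex.ofReal).mulVec w) i) = 0 := by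
      simp only [Matrix.mulVec, dotProduct, Matrix.map_apply]
      rw [Finset.sum_comm]
      calc (∑ j, ∑ i, (M i j : ℂ) * w j)
          = ∑ j, (∑ i, ((M i j : ℝ) : ℂ)) * w j := by
            apply Finset.sum_congr rfl; intro j _; rw [Finset.sum_mul]
        _ = 0 := by
            apply Finset.sum_eq_zero; intro j _; rw [hcolC j, zero_mul]
    simp only [dotProduct, Pi.star_apply]
    calc (∑ i, star (u i) * ((M.map Complex.ofReal).mulVec w) i)
        = ∑ i, (star (w i) * ((M.map Complex.ofReal).mulVec w) i
            + star α * ((M.map Complex.ofReal).mulVec w) i) := by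
          apply Finset.sum_congr rfl; intro i _
          simp only [hw, star_sub]; ring
      _ = (∑ i, star (w i) * ((M.map Complex.ofReal).mulVec w) i)
            + star α * (∑ i, ((M.map Complex.ofReal).mulVec w) i) := by
          rw [Finset.sum_add_distrib, Finset.mul_sum]
      _ = ∑ i, star (w i) * ((M.map Complex.ofReal).mulVec w) i := by
          rw [hsum0]; ring
  have hwnorm : (∑ k, ‖w k‖ ^ 2) = s - Complex.normSq T / N := by
    have h1 : ∀ k, ‖w k‖ ^ 2
        = Complex.normSq (u k) + Complex.normSq α - 2 * (u k * (starRingEnd ℂ) α).re := by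
      intro k
      rw [Complex.sq_norm]
      simp only [hw]
      exact Complex.normSq_sub _ _
    rw [Finset.sum_congr rfl (fun k _ => h1 k)]
    have h2 : (∑ k, (Complex.normSq (u k) + Complex.normSq α
        - 2 * (u k * (starRingEnd ℂ) α).re))
        = (∑ k, Complex.normSq (u k)) + N * Complex.normSq α
          - 2 * (T * (starRingEnd ℂ) α).re := by
      rw [Finset.sum_sub_distrib, Finset.sum_add_distrib, Finset.sum_const,
        Finset.card_univ, Fintype.card_fin, nsmul_eq_mul]
      congr 1
      rw [← Finset.mul_sum, ← Complex.re_sum, ← Finset.sum_mul, ← hTdef]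
    rw [h2]
    have h3 : (T * (starRingEnd ℂ) α).re = N * Complex.normSq α := by
      rw [← hNα, mul_assoc, Complex.mul_conj]
      push_cast
      simp [Complex.mul_re]
    have h4 : Complex.normSq α = Complex.normSq T / (N * N) := by
      rw [hα, Complex.normSq_div]
      congr 1
      have : ((N : ℂ)) = (((N:ℝ) : ℂ)) := by push_cast; rfl
      rw [this, Complex.normSq_ofReal]
    have h5 : (∑ k, Complex.normSq (u k)) = s := by
      rw [hs]; apply Finset.sum_congr rfl; intro k _; rw [Complex.sq_norm]
    rw [h3, h4, h5]
    field_simp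
    ring
  have hwb : c * s ≤ (∑ k, ‖w k‖ ^ 2) := by
    rw [hwnorm]
    have h6 : Complex.normSq T / N ≤ (1 - c) * s := by
      rw [div_le_iff₀ hNR]
      calc Complex.normSq T = ‖T‖ ^ 2 := (Complex.sq_norm T).symm
        _ ≤ (1 - c) * N * s := hT
        _ = (1 - c) * s * N := by ring
    linarith
  calc c * lam2 * s = lam2 * (c * s) := by ring
    _ ≤ lam2 * (∑ k, ‖w k‖ ^ 2) :=
        mul_le_mul_of_nonneg_left hwb hlam2pos.le
    _ ≤ (star w ⬝ᵥ (M.map Complex.ofReal).mulVec w).re := hlam2 w hsumw0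
    _ = (star u ⬝ᵥ (M.map Complex.ofReal).mulVec u).re := by rw [hquad]



set_option maxHeartbeats 2000000




/-- Parametric synchronization condition: for `A = ϖ₀I + ηe^{jφ}(diag(ς̄*) − Y)`, `P` the
projector off `span(φ₁)`, `M = Re(e^{jφ}Y)` a Laplacian with algebraic connectivity
`λ₂(M) > 0`, eigenvector entry bounds `δ̄, γ̄`, and `max_k Re(e^{jφ}ς̄*_k) < c λ₂(M)` with
`c = (1−γ̄)²(1+cos δ̄)/2`, the Lyapunov derivative
`V̇ = η vᴴP[Re(e^{jφ}diag(ς̄*)) − M]Pv ≤ η‖Pv‖²(max_k Re(e^{jφ}ς̄*_k) − cλ₂(M)) < 0`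
for all `v ∉ span(φ₁)`. -/
theorem parametric_synchronization_lyapunov_decrease {N : ℕ} (hN : 0 < N)
    (ϖ₀ : ℂ) (hϖ : ϖ₀.re = 0) (η φ : ℝ) (hη : 0 < η)
    (ςs : Fin N → ℂ) (Y : Matrix (Fin N) (Fin N) ℂ) (hY : Y.IsSymm)
    (hY1 : Y.mulVec (fun _ => 1) = 0)
    (A : Matrix (Fin N) (Fin N) ℂ)
    (hA : A = ϖ₀ • (1 : Matrix (Fin N) (Fin N) ℂ) +
      ((η : ℂ) * Complex.exp (Complex.I * φ)) • (Matrix.diagonal ςs - Y))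
    (lam1 : ℂ) (φ₁ : Fin N → ℂ) (heig : A.mulVec φ₁ = lam1 • φ₁) (hφ : ∀ k, φ₁ k ≠ 0)
    (P : Matrix (Fin N) (Fin N) ℂ)
    (hP : P = 1 - (star φ₁ ⬝ᵥ φ₁)⁻¹ •
      Matrix.of (fun i j => φ₁ i * (starRingEnd ℂ) (φ₁ j)))
    (M : Matrix (Fin N) (Fin N) ℝ)
    (hM : ∀ i j, M i j = (Complex.exp (Complex.I * φ) * Y i j).re)
    (lam2 : ℝ) (hlam2pos : 0 < lam2)
    (hlam2 : ∀ w : Fin N → ℂ, (∑ k, w k) = 0 →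
      lam2 * (∑ k, ‖w k‖ ^ 2)
        ≤ (star w ⬝ᵥ (M.map Complex.ofReal).mulVec w).re)
    (δb γb : ℝ) (hδ : δb ∈ Set.Ico 0 (Real.pi / 2)) (hγ : γb ∈ Set.Ioo 0 1)
    (harg : ∀ k l, |Complex.arg (φ₁ k) - Complex.arg (φ₁ l)| ≤ δb)
    (hamp : ∀ k l, |‖φ₁ k‖ / ‖φ₁ l‖ - 1| ≤ γb)
    (c : ℝ) (hc : c = (1 - γb) ^ 2 * (1 + Real.cos δb) / 2)
    (maxRe : ℝ)
    (hmax : maxRe = Finset.univ.sup' (Finset.univ_nonempty_iff.mpr ⟨⟨0, hN⟩⟩)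
      fun k => (Complex.exp (Complex.I * φ) * ςs k).re)
    (hbound : maxRe < c * lam2)
    (v : Fin N → ℂ) (hv : P.mulVec v ≠ 0) :
    ((1 / 2 : ℂ) * (star v ⬝ᵥ ((P * (A + A.conjTranspose) * P).mulVec v))).re
      = η * (star (P.mulVec v) ⬝ᵥ
          ((Matrix.diagonal (fun k => ((Complex.exp (Complex.I * φ) * ςs k).re : ℂ)) -
            M.map Complex.ofReal).mulVec (P.mulVec v))).re ∧
    ((1 / 2 : ℂ) * (star v ⬝ᵥ ((P * (A + A.conjTranspose) * P).mulVec v))).re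
      ≤ η * (∑ k, ‖P.mulVec v k‖ ^ 2) * (maxRe - c * lam2) ∧
    ((1 / 2 : ℂ) * (star v ⬝ᵥ ((P * (A + A.conjTranspose) * P).mulVec v))).re < 0 := by
  have hne : (univ : Finset (Fin N)).Nonempty := ⟨⟨0, hN⟩, mem_univ _⟩
  -- β = ‖φ₁‖²
  have hβsum : star φ₁ ⬝ᵥ φ₁ = ((∑ k, ‖φ₁ k‖ ^ 2 : ℝ) : ℂ) := by
    rw [Complex.ofReal_sum]
    apply Finset.sum_congr rfl
    intro k _
    rw [Complex.sq_norm, Pi.star_apply]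
    exact (Complex.normSq_eq_conj_mul_self).symm
  have hSφpos : (0:ℝ) < ∑ k, ‖φ₁ k‖ ^ 2 :=
    Finset.sum_pos (fun k _ => pow_pos (norm_pos_iff.mpr (hφ k)) 2) hne
  have hβne : star φ₁ ⬝ᵥ φ₁ ≠ 0 := by
    rw [hβsum]
    exact_mod_cast hSφpos.ne'
  -- P is Hermitian
  have hXH : (Matrix.of fun i j => φ₁ i * (starRingEnd ℂ) (φ₁ j))ᴴ
      = Matrix.of (fun i j => φ₁ i * (starRingEnd ℂ) (φ₁ j)) := by
    ext i j
    simp only [Matrix.conjTranspose_apply, Matrix.of_apply, star_mul']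
    simp [mul_comm]
  have hPH : P.conjTranspose = P := by
    rw [hP, conjTranspose_sub, conjTranspose_one, conjTranspose_smul, hXH]
    congr 2
    rw [star_inv₀]
    rw [show star (star φ₁ ⬝ᵥ φ₁) = (starRingEnd ℂ) (star φ₁ ⬝ᵥ φ₁) from rfl]
    rw [hβsum, Complex.conj_ofReal]
  -- P annihilates φ₁
  have hXφ : (Matrix.of fun i j => φ₁ i * (starRingEnd ℂ) (φ₁ j)).mulVec φ₁
      = (star φ₁ ⬝ᵥ φ₁) • φ₁ := by
    funext i
    simp only [Matrix.mulVec, dotProduct, Matrix.of_apply, Pi.smul_apply,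
      smul_eq_mul]
    calc (∑ j, φ₁ i * (starRingEnd ℂ) (φ₁ j) * φ₁ j)
        = φ₁ i * ∑ j, (starRingEnd ℂ) (φ₁ j) * φ₁ j := by
          rw [Finset.mul_sum]; apply Finset.sum_congr rfl; intro j _; ring
      _ = (star φ₁ ⬝ᵥ φ₁) * φ₁ i := by rw [mul_comm]; rfl
  have hPφ : P.mulVec φ₁ = 0 := by
    rw [hP, Matrix.sub_mulVec, Matrix.one_mulVec, Matrix.smul_mulVec, hXφ,
      smul_smul, inv_mul_cancel₀ hβne, one_smul, sub_self]
  -- orthogonality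
  have hvP : star φ₁ ᵥ* P = 0 := by
    have h := Matrix.star_mulVec P φ₁
    rw [hPφ, star_zero, hPH] at h
    exact h.symm
  have horth : star φ₁ ⬝ᵥ P.mulVec v = 0 := by
    rw [Matrix.dotProduct_mulVec, hvP, zero_dotProduct]
  -- quadratic form reduction
  have hdot : ∀ (X : Matrix (Fin N) (Fin N) ℂ),
      star v ⬝ᵥ ((P * X * P).mulVec v)
        = star (P.mulVec v) ⬝ᵥ (X.mulVec (P.mulVec v)) := by
    intro X
    rw [← Matrix.mulVec_mulVec, ← Matrix.mulVec_mulVec, Matrix.dotProduct_mulVec]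
    congr 1
    conv_lhs => rw [← hPH]
    rw [← Matrix.star_mulVec]
  set e := Complex.exp (Complex.I * (φ:ℂ)) with he
  -- A is symmetric
  have hAT : A.transpose = A := by
    rw [hA, Matrix.transpose_add, Matrix.transpose_smul, Matrix.transpose_one,
      Matrix.transpose_smul, Matrix.transpose_sub, Matrix.diagonal_transpose, hY]
  -- A + Aᴴ
  have hAsum : A + A.conjTranspose = (((2 * η : ℝ)) : ℂ) •
      (Matrix.diagonal (fun k => (((e * ςs k).re : ℝ) : ℂ)) - M.map Complex.ofReal) := by
    ext i j
    have hAH : A.conjTranspose i j = (starRingEnd ℂ) (A i j) := by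
      rw [Matrix.conjTranspose_apply]
      congr 1
      calc A j i = A.transpose i j := rfl
        _ = A i j := by rw [hAT]
    rw [Matrix.add_apply, hAH, Complex.add_conj, Matrix.smul_apply, Matrix.sub_apply,
      Matrix.map_apply, smul_eq_mul]
    by_cases hij : i = j
    · subst hij
      have hAii : A i i = ϖ₀ + ((η:ℂ) * e) * (ςs i - Y i i) := by
        rw [hA]
        simp [Matrix.add_apply, Matrix.smul_apply, Matrix.one_apply_eq,
          Matrix.sub_apply, Matrix.diagonal_apply_eq, smul_eq_mul]
      have hre : (A i i).re = η * ((e * ςs i).re - M i i) := by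
        rw [hAii, mul_assoc]
        rw [Complex.add_re, hϖ, Complex.re_ofReal_mul, mul_sub, Complex.sub_re, hM i i]
        ring
      rw [Matrix.diagonal_apply_eq, hre]
      push_cast
      ring
    · have hAij : A i j = -(((η:ℂ) * e) * Y i j) := by
        rw [hA]
        simp [Matrix.add_apply, Matrix.smul_apply, Matrix.one_apply_ne hij,
          Matrix.sub_apply, Matrix.diagonal_apply_ne _ hij, smul_eq_mul]
      have hre : (A i j).re = η * (0 - M i j) := by
        rw [hAij, mul_assoc]
        rw [Complex.neg_re, Complex.re_ofReal_mul, hM i j]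
        ring
      rw [Matrix.diagonal_apply_ne _ hij, hre]
      push_cast
      ring
  set u := P.mulVec v with hu
  set Z := star u ⬝ᵥ ((Matrix.diagonal (fun k => (((e * ςs k).re : ℝ) : ℂ))
      - M.map Complex.ofReal).mulVec u) with hZ
  have hLHS : ((1/2 : ℂ) * (star v ⬝ᵥ ((P * (A + A.conjTranspose) * P).mulVec v))).re
      = η * Z.re := by
    rw [hdot (A + A.conjTranspose), hAsum, Matrix.smul_mulVec,
      dotProduct_smul, smul_eq_mul, ← mul_assoc]
    have h7 : (1/2 : ℂ) * ((2 * η : ℝ) : ℂ) = ((η : ℝ) : ℂ) := by push_cast; ring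
    rw [h7, ← hZ, Complex.re_ofReal_mul]
  have hZre : Z.re = (∑ k, (e * ςs k).re * ‖u k‖ ^ 2)
      - (star u ⬝ᵥ ((M.map Complex.ofReal).mulVec u)).re := by
    rw [hZ, Matrix.sub_mulVec, dotProduct_sub, Complex.sub_re]
    congr 1
    simp only [dotProduct, Pi.star_apply]
    rw [Complex.re_sum]
    apply Finset.sum_congr rfl
    intro k _
    rw [Matrix.mulVec_diagonal]
    have h8 : star (u k) * ((((e * ςs k).re : ℝ):ℂ) * u k)
        = (((e * ςs k).re : ℝ):ℂ) * (star (u k) * u k) := by ring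
    rw [h8]
    have h9 : star (u k) * u k = ((‖u k‖ ^ 2 : ℝ) : ℂ) := by
      rw [Complex.sq_norm]; exact (Complex.normSq_eq_conj_mul_self).symm
    rw [h9, ← Complex.ofReal_mul, Complex.ofReal_re]
  set s := ∑ k, ‖u k‖ ^ 2 with hs
  have hspos : 0 < s := by
    have hex : ∃ k, u k ≠ 0 := by
      by_contra h
      push_neg at h
      exact hv (funext fun k => h k)
    obtain ⟨k, hk⟩ := hex
    exact Finset.sum_pos' (fun j _ => sq_nonneg _)
      ⟨k, mem_univ k, pow_pos (norm_pos_iff.mpr hk) 2⟩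
  have hdiag : (∑ k, (e * ςs k).re * ‖u k‖ ^ 2) ≤ maxRe * s := by
    rw [hs, Finset.mul_sum]
    apply Finset.sum_le_sum
    intro k _
    apply mul_le_mul_of_nonneg_right _ (sq_nonneg _)
    rw [hmax]
    exact Finset.le_sup' (fun k => (e * ςs k).re) (mem_univ k)
  -- bounds on c
  have hγ0 : 0 < γb := hγ.1
  have hγ1 : γb < 1 := hγ.2
  have hcosn : 0 ≤ 1 + Real.cos δb := by nlinarith [Real.neg_one_le_cos δb]
  have hc0 : 0 ≤ c := by
    rw [hc]
    have := mul_nonneg (sq_nonneg (1 - γb)) hcosn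
    linarith
  -- coherence bound
  set Q := ∑ k, φ₁ k with hQ
  have hcoh := coherence_bound hN φ₁ hφ δb γb hδ hγ harg hamp
  have hcoh' : c * ((N : ℝ) * (∑ k, ‖φ₁ k‖ ^ 2)) ≤ Complex.normSq Q := by
    rw [← Complex.sq_norm]
    calc c * ((N : ℝ) * (∑ k, ‖φ₁ k‖ ^ 2))
        = (1 - γb) ^ 2 * ((1 + Real.cos δb) / 2) * N * (∑ k, ‖φ₁ k‖ ^ 2) := by
          rw [hc]; ring
      _ ≤ ‖Q‖ ^ 2 := by rw [hQ]; exact hcoh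
  set T := ∑ k, u k with hT
  set μ := (starRingEnd ℂ) Q / (((∑ k, ‖φ₁ k‖ ^ 2 : ℝ)) : ℂ) with hμ
  set g : Fin N → ℂ := fun k => 1 - μ * φ₁ k with hg
  have hTg : T = ∑ k, (starRingEnd ℂ) (g k) * u k := by
    have h12 : ∀ k, (starRingEnd ℂ) (g k) * u k
        = u k - (starRingEnd ℂ) μ * ((starRingEnd ℂ) (φ₁ k) * u k) := by
      intro k; simp only [hg, _root_.map_sub, _root_.map_one, _root_.map_mul]; ring
    rw [Finset.sum_congr rfl (fun k _ => h12 k), Finset.sum_sub_distrib, ← Finset.mul_sum]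
    have h10 : (∑ k, (starRingEnd ℂ) (φ₁ k) * u k) = 0 := by
      have := horth
      simpa [dotProduct] using this
    rw [h10, mul_zero, sub_zero, hT]
  have hμnormSq : Complex.normSq μ
      = Complex.normSq Q / (∑ k, ‖φ₁ k‖ ^ 2) ^ 2 := by
    rw [hμ, Complex.normSq_div, Complex.normSq_conj, Complex.normSq_ofReal]
    ring_nf
  have hμQre : (μ * Q).re = Complex.normSq Q / (∑ k, ‖φ₁ k‖ ^ 2) := by
    rw [hμ, div_mul_eq_mul_div]
    have h16 : (starRingEnd ℂ) Q * Q = ((Complex.normSq Q : ℝ) : ℂ) :=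
      (Complex.normSq_eq_conj_mul_self).symm
    rw [h16, ← Complex.ofReal_div, Complex.ofReal_re]
  have hgsum : (∑ k, ‖g k‖ ^ 2)
      = (N : ℝ) - Complex.normSq Q / (∑ k, ‖φ₁ k‖ ^ 2) := by
    have h11 : ∀ k, ‖g k‖ ^ 2
        = 1 + Complex.normSq μ * Complex.normSq (φ₁ k) - 2 * (μ * φ₁ k).re := by
      intro k
      rw [Complex.sq_norm]
      simp only [hg]
      rw [Complex.normSq_sub, Complex.normSq_one, Complex.normSq_mul, one_mul,
        Complex.conj_re]
    rw [Finset.sum_congr rfl (fun k _ => h11 k)]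
    have h17 : (∑ k, (1 + Complex.normSq μ * Complex.normSq (φ₁ k) - 2 * (μ * φ₁ k).re))
        = (N : ℝ) + Complex.normSq μ * (∑ k, Complex.normSq (φ₁ k)) - 2 * (μ * Q).re := by
      rw [Finset.sum_sub_distrib, Finset.sum_add_distrib, Finset.sum_const,
        Finset.card_univ, Fintype.card_fin, nsmul_eq_mul, mul_one, ← Finset.mul_sum,
        ← Finset.mul_sum, ← Complex.re_sum, ← Finset.mul_sum, ← hQ]
    rw [h17]
    have h18 : (∑ k, Complex.normSq (φ₁ k)) = (∑ k, ‖φ₁ k‖ ^ 2) := by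
      apply Finset.sum_congr rfl; intro k _; rw [Complex.sq_norm]
    rw [h18, hμnormSq, hμQre]
    field_simp
    ring
  have hTbound : ‖T‖ ^ 2 ≤ (1 - c) * (N : ℝ) * s := by
    calc ‖T‖ ^ 2
        = ‖∑ k, (starRingEnd ℂ) (g k) * u k‖ ^ 2 := by rw [← hTg]
      _ ≤ (∑ k, ‖g k‖ ^ 2) * s := by rw [hs]; exact cs_complex_sum g u
      _ ≤ ((1 - c) * (N : ℝ)) * s := by
          apply mul_le_mul_of_nonneg_right _ (le_of_lt hspos)
          rw [hgsum]
          have h13 : c * (N : ℝ) ≤ Complex.normSq Q / (∑ k, ‖φ₁ k‖ ^ 2) := by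
            rw [le_div_iff₀ hSφpos]
            calc c * (N : ℝ) * (∑ k, ‖φ₁ k‖ ^ 2)
                = c * ((N : ℝ) * (∑ k, ‖φ₁ k‖ ^ 2)) := by ring
              _ ≤ Complex.normSq Q := hcoh'
          linarith
      _ = (1 - c) * (N : ℝ) * s := by ring
  have hMsymm : ∀ i j, M i j = M j i := by
    intro i j
    rw [hM i j, hM j i, hY.apply i j]
  have hMrow : ∀ i, (∑ j, M i j) = 0 := by
    intro i
    have h14 := congrFun hY1 i
    simp only [Matrix.mulVec, dotProduct, mul_one, Pi.zero_apply] at h14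
    calc (∑ j, M i j) = ∑ j, (e * Y i j).re := by
          apply Finset.sum_congr rfl; intro j _; rw [hM]
      _ = (e * ∑ j, Y i j).re := by rw [Finset.mul_sum, Complex.re_sum]
      _ = 0 := by rw [h14, mul_zero, Complex.zero_re]
  have hquadlow := laplacian_quad_bound hN M hMsymm hMrow lam2 hlam2 hlam2pos c hc0 u hTbound
  have hle : ((1/2 : ℂ) * (star v ⬝ᵥ ((P * (A + A.conjTranspose) * P).mulVec v))).re
      ≤ η * s * (maxRe - c * lam2) := by
    rw [hLHS, hZre]
    have h15 : (∑ k, (e * ςs k).re * ‖u k‖ ^ 2)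
        - (star u ⬝ᵥ ((M.map Complex.ofReal).mulVec u)).re ≤ s * (maxRe - c * lam2) := by
      nlinarith [hdiag, hquadlow]
    calc η * ((∑ k, (e * ςs k).re * ‖u k‖ ^ 2)
          - (star u ⬝ᵥ ((M.map Complex.ofReal).mulVec u)).re)
        ≤ η * (s * (maxRe - c * lam2)) := mul_le_mul_of_nonneg_left h15 hη.le
      _ = η * s * (maxRe - c * lam2) := by ring
  have hneg : η * s * (maxRe - c * lam2) < 0 :=
    mul_neg_of_pos_of_neg (mul_pos hη hspos) (by linarith)
  exact ⟨hLHS, hle, lt_of_le_of_lt hle hneg⟩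
end

section
/- Let G', B' ∈ ℝ^{N×N} be symmetric Laplacian matrices (G'·1 = B'·1 = 0) with G' positive semidefinite of rank N−1 (null space spanned by 1), and let α > 0. Then the (2N+1)×2N real matrix A = [[G' + αI, −B'], [B', G'], [0ᵀ, 1ᵀ]] has rank 2N; moreover for any right-hand side b = (σ'* + αu*, ρ'* − (1/N)·1·1ᵀρ'*, 0) the system A x = b has a unique solution, since 1ᵀ applied to the middle block rows of [A, b] vanishes. -/
open Matrix Finset

lemma aux_sum_mulVec {N : ℕ} (M : Matrix (Fin N) (Fin N) ℝ) (hsym : M.IsSymm)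
    (h1 : M.mulVec (fun _ => 1) = 0) (v : Fin N → ℝ) :
    ∑ i, M.mulVec v i = 0 := by
  have h1' : ∀ j : Fin N, ∑ i, M j i = 0 := fun j => by
    have := congrFun h1 j
    simpa [Matrix.mulVec, dotProduct] using this
  calc ∑ i, M.mulVec v i = ∑ i, ∑ j, M i j * v j := by
        simp [Matrix.mulVec, dotProduct]
    _ = ∑ j, ∑ i, M i j * v j := Finset.sum_comm
    _ = 0 := by
        refine Finset.sum_eq_zero fun j _ => ?_
        have hz : ∑ i, M i j = 0 := by
          rw [show (∑ i, M i j) = ∑ i, M j i from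
            Finset.sum_congr rfl fun i _ => (hsym.apply i j).symm ▸ rfl]
          exact h1' j
        rw [← Finset.sum_mul, hz, zero_mul]

lemma aux_dot_symm {N : ℕ} (M : Matrix (Fin N) (Fin N) ℝ) (hsym : M.IsSymm)
    (v w : Fin N → ℝ) : v ⬝ᵥ M.mulVec w = w ⬝ᵥ M.mulVec v := by
  simp only [dotProduct, Matrix.mulVec, Finset.mul_sum]
  rw [Finset.sum_comm]
  refine Finset.sum_congr rfl fun i _ => Finset.sum_congr rfl fun j _ => ?_
  rw [hsym.apply i j]
  ring

lemma aux_ker {N : ℕ} (hN : 0 < N)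
    (G B : Matrix (Fin N) (Fin N) ℝ) (hBsym : B.IsSymm)
    (hGpsd : ∀ w : Fin N → ℝ, 0 ≤ w ⬝ᵥ G.mulVec w)
    (hker : ∀ w : Fin N → ℝ, G.mulVec w = 0 ↔ ∃ c : ℝ, w = fun _ => c)
    (α : ℝ) (hα : 0 < α) (u δ : Fin N → ℝ)
    (h1 : G.mulVec u + α • u - B.mulVec δ = 0)
    (h2 : B.mulVec u + G.mulVec δ = 0)
    (h3 : ∑ k, δ k = 0) : u = 0 ∧ δ = 0 := by
  have key : u ⬝ᵥ (G.mulVec u + α • u - B.mulVec δ) + δ ⬝ᵥ (B.mulVec u + G.mulVec δ) = 0 := by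
    rw [h1, h2]; simp
  have expand : u ⬝ᵥ G.mulVec u + α * (u ⬝ᵥ u) + δ ⬝ᵥ G.mulVec δ = 0 := by
    have hb : u ⬝ᵥ B.mulVec δ = δ ⬝ᵥ B.mulVec u := aux_dot_symm B hBsym u δ
    simp only [dotProduct_add, dotProduct_sub, dotProduct_smul, smul_eq_mul] at key
    linarith [key, hb]
  have huu : u ⬝ᵥ u = 0 := by
    have h0 : 0 ≤ u ⬝ᵥ u := by
      simpa [dotProduct] using Finset.sum_nonneg fun i (_ : i ∈ univ) => mul_self_nonneg (u i)
    nlinarith [hGpsd u, hGpsd δ]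
  have hu0 : u = 0 := by
    funext i
    have hs : ∑ j, u j * u j = 0 := by simpa [dotProduct] using huu
    have := (Finset.sum_eq_zero_iff_of_nonneg
      (fun j (_ : j ∈ univ) => mul_self_nonneg (u j))).mp hs i (by simp)
    simpa using mul_self_eq_zero.mp this
  have hGδ : G.mulVec δ = 0 := by
    rw [hu0] at h2; simpa [Matrix.mulVec_zero] using h2
  obtain ⟨c, hc⟩ := (hker δ).mp hGδ
  have hc0 : c = 0 := by
    rw [hc] at h3
    simp at h3
    rcases h3 with h | h
    · exact absurd h (by positivity)
    · exact h
  exact ⟨hu0, by rw [hc, hc0]; rfl⟩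

noncomputable def auxMap {N : ℕ} (G B : Matrix (Fin N) (Fin N) ℝ) (α : ℝ) :
    ((Fin N → ℝ) × (Fin N → ℝ)) →ₗ[ℝ] ((Fin N → ℝ) × (Fin N → ℝ)) where
  toFun p := (G.mulVec p.1 + α • p.1 - B.mulVec p.2,
    B.mulVec p.1 + G.mulVec p.2 + fun _ => (∑ k, p.2 k) / N)
  map_add' p q := by
    refine Prod.ext ?_ ?_
    · funext i
      simp [Matrix.mulVec_add, smul_add]
      ring
    · funext i
      simp [Matrix.mulVec_add, Finset.sum_add_distrib, add_div]
      ring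
  map_smul' c p := by
    refine Prod.ext ?_ ?_
    · funext i
      simp [Matrix.mulVec_smul, Finset.mul_sum, smul_smul, mul_comm]
      ring
    · funext i
      simp [Matrix.mulVec_smul, ← Finset.mul_sum, mul_div_assoc]

/-- Uniqueness of the slow-system equilibrium: with `G', B'` symmetric Laplacians, `G'` PSD
with null space `span(1)`, and `α > 0`, the linear map
`(u, δ) ↦ ((G' + αI)u − B'δ, B'u + G'δ, 1ᵀδ)` is injective (rank `2N`), and the equilibrium
system with the center-of-angle right-hand side has a unique solution. -/
theorem slow_system_unique_equilibrium {N : ℕ} (hN : 0 < N)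
    (G B : Matrix (Fin N) (Fin N) ℝ)
    (hGsym : G.IsSymm) (hBsym : B.IsSymm)
    (hG1 : G.mulVec (fun _ => 1) = 0) (hB1 : B.mulVec (fun _ => 1) = 0)
    (hGpsd : ∀ w : Fin N → ℝ, 0 ≤ w ⬝ᵥ G.mulVec w)
    (hker : ∀ w : Fin N → ℝ, G.mulVec w = 0 ↔ ∃ c : ℝ, w = fun _ => c)
    (α : ℝ) (hα : 0 < α) (σs ρs us : Fin N → ℝ) :
    Function.Injective (fun p : (Fin N → ℝ) × (Fin N → ℝ) =>
      (G.mulVec p.1 + α • p.1 - B.mulVec p.2,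
       B.mulVec p.1 + G.mulVec p.2,
       ∑ k, p.2 k)) ∧
    ∃! p : (Fin N → ℝ) × (Fin N → ℝ),
      G.mulVec p.1 + α • p.1 - B.mulVec p.2 = σs + α • us ∧
      B.mulVec p.1 + G.mulVec p.2 = ρs - (fun _ => (∑ k, ρs k) / N) ∧
      ∑ k, p.2 k = 0 := by
  have hNR : (N : ℝ) ≠ 0 := Nat.cast_ne_zero.mpr hN.ne'
  have hinj : Function.Injective (fun p : (Fin N → ℝ) × (Fin N → ℝ) =>
      (G.mulVec p.1 + α • p.1 - B.mulVec p.2,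
       B.mulVec p.1 + G.mulVec p.2,
       ∑ k, p.2 k)) := by
    intro p q h
    simp only [Prod.mk.injEq] at h
    obtain ⟨e1, e2, e3⟩ := h
    have h1 : G.mulVec (p.1 - q.1) + α • (p.1 - q.1) - B.mulVec (p.2 - q.2) = 0 := by
      funext i
      have := congrFun e1 i
      simp [Matrix.mulVec_sub, smul_sub] at this ⊢
      linarith
    have h2 : B.mulVec (p.1 - q.1) + G.mulVec (p.2 - q.2) = 0 := by
      funext i
      have := congrFun e2 i
      simp [Matrix.mulVec_sub] at this ⊢
      linarith
    have h3 : ∑ k, (p.2 - q.2) k = 0 := by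
      simp [Finset.sum_sub_distrib, e3]
    obtain ⟨hu, hδ⟩ := aux_ker hN G B hBsym hGpsd hker α hα _ _ h1 h2 h3
    exact Prod.ext (sub_eq_zero.mp hu) (sub_eq_zero.mp hδ)
  refine ⟨hinj, ?_⟩
  -- the auxiliary endomorphism is injective, hence surjective
  have hMinj : Function.Injective (auxMap G B α) := by
    rw [injective_iff_map_eq_zero]
    intro p hp
    have hp1 : G.mulVec p.1 + α • p.1 - B.mulVec p.2 = 0 := congrArg Prod.fst hp
    have hp2 : B.mulVec p.1 + G.mulVec p.2 + (fun _ => (∑ k, p.2 k) / N) = 0 :=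
      congrArg Prod.snd hp
    -- sum the second block
    have hsum : ∑ k, p.2 k = 0 := by
      have := congrArg (fun v => ∑ i, v i) hp2
      simp only [Pi.add_apply, Finset.sum_add_distrib, Pi.zero_apply,
        Finset.sum_const, Finset.card_univ, Fintype.card_fin, nsmul_eq_mul,
        Finset.sum_const_zero] at this
      rw [aux_sum_mulVec B hBsym hB1, aux_sum_mulVec G hGsym hG1,
        mul_div_cancel₀ _ hNR] at this
      linarith
    have hp2' : B.mulVec p.1 + G.mulVec p.2 = 0 := by
      funext i
      have := congrFun hp2 i
      simp [hsum] at this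
      simpa using this
    obtain ⟨hu, hδ⟩ := aux_ker hN G B hBsym hGpsd hker α hα _ _ hp1 hp2' hsum
    exact Prod.ext hu hδ
  have hMsurj : Function.Surjective (auxMap G B α) :=
    (LinearMap.injective_iff_surjective).mp hMinj
  obtain ⟨p, hp⟩ := hMsurj (σs + α • us, ρs - fun _ => (∑ k, ρs k) / N)
  have hp1 : G.mulVec p.1 + α • p.1 - B.mulVec p.2 = σs + α • us := congrArg Prod.fst hp
  have hp2 : B.mulVec p.1 + G.mulVec p.2 + (fun _ => (∑ k, p.2 k) / N)
      = ρs - fun _ => (∑ k, ρs k) / N := congrArg Prod.snd hp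
  have hsum : ∑ k, p.2 k = 0 := by
    have := congrArg (fun v => ∑ i, v i) hp2
    simp only [Pi.add_apply, Pi.sub_apply, Finset.sum_add_distrib, Finset.sum_sub_distrib,
      Finset.sum_const, Finset.card_univ, Fintype.card_fin, nsmul_eq_mul] at this
    rw [aux_sum_mulVec B hBsym hB1, aux_sum_mulVec G hGsym hG1,
      mul_div_cancel₀ _ hNR, mul_div_cancel₀ _ hNR] at this
    linarith
  have hp2' : B.mulVec p.1 + G.mulVec p.2 = ρs - fun _ => (∑ k, ρs k) / N := by
    funext i
    have := congrFun hp2 i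
    simp [hsum] at this
    simpa using this
  refine ⟨p, ⟨hp1, hp2', hsum⟩, ?_⟩
  rintro q ⟨hq1, hq2, hq3⟩
  apply hinj
  simp only [Prod.mk.injEq]
  exact ⟨hq1.trans hp1.symm, hq2.trans hp2'.symm, hq3.trans hsum.symm⟩
end

section
/- Consider the linear ODE system on ℝ^{3N}: ũ' = −ηG'ũ + ηB'δ̃ − ηα ũ_f, δ̃' = −ηB'ũ − ηG'δ̃, τ ũ_f' = ũ − ũ_f, with η, α, τ > 0, G' symmetric positive semidefinite with ker G' = span(1), B' symmetric with B'·1 = 0, and initial condition satisfying 1ᵀδ̃ = 0 (preserved by the flow). Then W(ũ, δ̃, ũ_f) = ½‖ũ‖² + ½‖δ̃‖² + ½ηατ‖ũ_f‖² satisfies Ẇ = −η ũᵀG'ũ − η δ̃ᵀG'δ̃ − ηα‖ũ_f‖² ≤ 0, and the largest invariant set where Ẇ = 0 is the origin; hence the origin is globally asymptotically stable. -/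
open Matrix Finset Filter Topology

section AuxLemmas

lemma young' (x y θ : ℝ) (hθ : 0 < θ) : x * y ≤ θ * x^2 + (4*θ)⁻¹ * y^2 := by
  have h4 : (0:ℝ) < 4*θ := by linarith
  have h : θ*x^2 + (4*θ)⁻¹*y^2 - x*y = (2*θ*x - y)^2 * (4*θ)⁻¹ := by
    field_simp; ring
  nlinarith [mul_nonneg (sq_nonneg (2*θ*x - y)) (le_of_lt (inv_pos.mpr h4))]

lemma dot_symm' {N : ℕ} (M : Matrix (Fin N) (Fin N) ℝ) (hM : M.IsSymm) (v w : Fin N → ℝ) :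
    v ⬝ᵥ M.mulVec w = w ⬝ᵥ M.mulVec v := by
  simp only [dotProduct, Matrix.mulVec, dotProduct, Finset.mul_sum]
  rw [Finset.sum_comm]
  refine Finset.sum_congr rfl fun i _ => Finset.sum_congr rfl fun j _ => ?_
  rw [hM.apply i j]; ring

lemma rowbound {N : ℕ} (M : Matrix (Fin N) (Fin N) ℝ) (x : Fin N → ℝ) (hx : ∀ i, 0 ≤ x i) :
    ∑ i, ∑ j, |M i j| * x i ≤ (∑ i, ∑ j, |M i j|) * ∑ i, x i := by
  have h1 : ∀ i : Fin N, ∑ j, |M i j| * x i = (∑ j, |M i j|) * x i := fun i =>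
    (Finset.sum_mul _ _ _).symm
  calc ∑ i, ∑ j, |M i j| * x i = ∑ i, (∑ j, |M i j|) * x i := Finset.sum_congr rfl fun i _ => h1 i
  _ ≤ ∑ i, (∑ i, ∑ j, |M i j|) * x i := by
      refine Finset.sum_le_sum fun i _ => mul_le_mul_of_nonneg_right ?_ (hx i)
      exact Finset.single_le_sum (f := fun i' => ∑ j, |M i' j|)
        (fun i' _ => Finset.sum_nonneg fun j _ => abs_nonneg _) (Finset.mem_univ i)
  _ = (∑ i, ∑ j, |M i j|) * ∑ i, x i := by rw [← Finset.mul_sum]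

lemma dot_mulVec_le' {N : ℕ} (M : Matrix (Fin N) (Fin N) ℝ) (v w : Fin N → ℝ) (θ : ℝ) (hθ : 0 < θ) :
    v ⬝ᵥ M.mulVec w ≤ (∑ i, ∑ j, |M i j|) * ((4*θ)⁻¹ * ∑ i, (v i)^2 + θ * ∑ j, (w j)^2) := by
  set E := ∑ i, ∑ j, |M i j| with hE
  have h4 : (0:ℝ) < 4*θ := by linarith
  have key : ∀ i j, v i * (M i j * w j) ≤ |M i j| * ((4*θ)⁻¹ * (v i)^2 + θ * (w j)^2) := by
    intro i j
    have h1 : v i * (M i j * w j) ≤ |M i j| * (|w j| * |v i|) := by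
      calc v i * (M i j * w j) ≤ |v i * (M i j * w j)| := le_abs_self _
      _ = |M i j| * (|w j| * |v i|) := by rw [abs_mul, abs_mul]; ring
    have h2 := young' (|w j|) (|v i|) θ hθ
    have h3 : |M i j| * (|w j| * |v i|) ≤ |M i j| * (θ * (w j)^2 + (4*θ)⁻¹ * (v i)^2) := by
      apply mul_le_mul_of_nonneg_left _ (abs_nonneg _)
      simpa [sq_abs] using h2
    calc v i * (M i j * w j) ≤ |M i j| * (θ * (w j)^2 + (4*θ)⁻¹ * (v i)^2) := le_trans h1 h3
    _ = |M i j| * ((4*θ)⁻¹ * (v i)^2 + θ * (w j)^2) := by ring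
  have step1 : v ⬝ᵥ M.mulVec w ≤ ∑ i, ∑ j, |M i j| * ((4*θ)⁻¹ * (v i)^2 + θ * (w j)^2) := by
    simp only [dotProduct, Matrix.mulVec, dotProduct, Finset.mul_sum]
    exact Finset.sum_le_sum fun i _ => Finset.sum_le_sum fun j _ => key i j
  refine le_trans step1 ?_
  have split : ∑ i, ∑ j, |M i j| * ((4*θ)⁻¹ * (v i)^2 + θ * (w j)^2)
      = (∑ i, ∑ j, |M i j| * ((4*θ)⁻¹ * (v i)^2)) + ∑ j, ∑ i, |M i j| * (θ * (w j)^2) := by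
    rw [Finset.sum_comm (f := fun j i => |M i j| * (θ * (w j)^2))]
    rw [← Finset.sum_add_distrib]
    refine Finset.sum_congr rfl fun i _ => ?_
    rw [← Finset.sum_add_distrib]
    exact Finset.sum_congr rfl fun j _ => by ring
  rw [split]
  have hA : ∑ i, ∑ j, |M i j| * ((4*θ)⁻¹ * (v i)^2) ≤ E * ((4*θ)⁻¹ * ∑ i, (v i)^2) := by
    have := rowbound M (fun i => (4*θ)⁻¹ * (v i)^2)
      (fun i => mul_nonneg (le_of_lt (inv_pos.mpr h4)) (sq_nonneg _))
    calc ∑ i, ∑ j, |M i j| * ((4*θ)⁻¹ * (v i)^2) ≤ E * ∑ i, (4*θ)⁻¹ * (v i)^2 := this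
    _ = E * ((4*θ)⁻¹ * ∑ i, (v i)^2) := by rw [← Finset.mul_sum]
  have hB : ∑ j, ∑ i, |M i j| * (θ * (w j)^2) ≤ E * (θ * ∑ j, (w j)^2) := by
    have := rowbound Mᵀ (fun j => θ * (w j)^2)
      (fun j => mul_nonneg (le_of_lt hθ) (sq_nonneg _))
    have hEt : ∑ i, ∑ j, |Mᵀ i j| = E := by rw [hE, Finset.sum_comm]; rfl
    calc ∑ j, ∑ i, |M i j| * (θ * (w j)^2) = ∑ i, ∑ j, |Mᵀ i j| * (θ * (w i)^2) := rfl
    _ ≤ (∑ i, ∑ j, |Mᵀ i j|) * ∑ j, θ * (w j)^2 := this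
    _ = E * (θ * ∑ j, (w j)^2) := by rw [hEt, ← Finset.mul_sum]
  calc _ ≤ E * ((4*θ)⁻¹ * ∑ i, (v i)^2) + E * (θ * ∑ j, (w j)^2) := add_le_add hA hB
  _ = E * ((4*θ)⁻¹ * ∑ i, (v i)^2 + θ * ∑ j, (w j)^2) := by ring

lemma psd_zero' {N : ℕ} (G : Matrix (Fin N) (Fin N) ℝ) (hGsym : G.IsSymm)
    (hGpsd : ∀ w : Fin N → ℝ, 0 ≤ w ⬝ᵥ G.mulVec w) (w : Fin N → ℝ)
    (hw : w ⬝ᵥ G.mulVec w = 0) : G.mulVec w = 0 := by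
  funext k
  set v : Fin N → ℝ := Pi.single k 1 with hv
  set a : ℝ := v ⬝ᵥ G.mulVec w with ha
  set b : ℝ := v ⬝ᵥ G.mulVec v with hb
  have hbnn : 0 ≤ b := hGpsd v
  have hq : ∀ t : ℝ, 0 ≤ 2*t*a + t^2*b := by
    intro t
    have h0 := hGpsd (w + t • v)
    have hexp : (w + t • v) ⬝ᵥ G.mulVec (w + t • v)
        = w ⬝ᵥ G.mulVec w + 2*t*a + t^2*b := by
      simp only [Matrix.mulVec_add, Matrix.mulVec_smul, add_dotProduct, dotProduct_add,
        smul_dotProduct, dotProduct_smul, smul_eq_mul]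
      rw [dot_symm' G hGsym w v, ← ha, ← hb]
      ring
    rw [hexp, hw, zero_add] at h0
    exact h0
  have ha0 : a = 0 := by
    by_contra hne
    have hq1 := hq (-a/(b+1))
    have hb1 : (0:ℝ) < b + 1 := by linarith
    have h2 : 2*(-a/(b+1))*a + (-a/(b+1))^2*b = -((a^2)*(b+2)/(b+1)^2) := by
      field_simp; ring
    rw [h2] at hq1
    have ha2 : 0 < a^2 := by positivity
    have hx : 0 < (a^2)*(b+2) := by nlinarith
    have hy : 0 < (b+1)^2 := by positivity
    have : 0 < (a^2)*(b+2)/(b+1)^2 := div_pos hx hy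
    linarith
  have hval : (G.mulVec w) k = a := by
    rw [ha, hv]
    simp [dotProduct, Pi.single_apply]
  rw [Pi.zero_apply, hval, ha0]

lemma gap' {N : ℕ} (G : Matrix (Fin N) (Fin N) ℝ) (hGsym : G.IsSymm)
    (hGpsd : ∀ w : Fin N → ℝ, 0 ≤ w ⬝ᵥ G.mulVec w)
    (hker : ∀ w : Fin N → ℝ, G.mulVec w = 0 ↔ ∃ c : ℝ, w = fun _ => c) :
    ∃ lam : ℝ, 0 < lam ∧ ∀ w : Fin N → ℝ, ∑ k, w k = 0 →
      lam * ∑ k, (w k)^2 ≤ w ⬝ᵥ G.mulVec w := by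
  classical
  set S : Set (Fin N → ℝ) := {w | ∑ k, w k = 0 ∧ ∑ k, (w k)^2 = 1} with hS
  have hq_cont : Continuous fun w : Fin N → ℝ => w ⬝ᵥ G.mulVec w := by
    have heq : (fun w : Fin N → ℝ => w ⬝ᵥ G.mulVec w)
        = fun w => ∑ i, w i * ∑ j, G i j * w j := rfl
    rw [heq]
    exact continuous_finset_sum _ fun i _ => (continuous_apply i).mul
      (continuous_finset_sum _ fun j _ => continuous_const.mul (continuous_apply j))
  by_cases hne : S.Nonempty
  · have hclosed : IsClosed S := by
      apply IsClosed.inter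
      · exact isClosed_eq (continuous_finset_sum _ fun k _ => continuous_apply k) continuous_const
      · exact isClosed_eq (continuous_finset_sum _ fun k _ => (continuous_apply k).pow 2)
          continuous_const
    have hbdd : Bornology.IsBounded S := by
      apply (Metric.isBounded_iff_subset_closedBall 0).mpr
      refine ⟨1, fun w hw => ?_⟩
      simp only [Metric.mem_closedBall, dist_zero_right]
      rw [pi_norm_le_iff_of_nonneg zero_le_one]
      intro k
      have h1 : (w k)^2 ≤ 1 := by
        rw [← hw.2]
        exact Finset.single_le_sum (f := fun k' => (w k')^2) (fun _ _ => sq_nonneg _)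
          (Finset.mem_univ k)
      rw [Real.norm_eq_abs, ← Real.sqrt_one, ← Real.sqrt_sq_eq_abs]
      exact Real.sqrt_le_sqrt h1
    have hcpt : IsCompact S := Metric.isCompact_of_isClosed_isBounded hclosed hbdd
    obtain ⟨w0, hw0S, hmin⟩ := hcpt.exists_isMinOn hne hq_cont.continuousOn
    refine ⟨w0 ⬝ᵥ G.mulVec w0, ?_, ?_⟩
    · rcases lt_or_eq_of_le (hGpsd w0) with h | h
      · exact h
      · exfalso
        have hGw0 : G.mulVec w0 = 0 := psd_zero' G hGsym hGpsd w0 h.symm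
        obtain ⟨c, hc⟩ := (hker w0).mp hGw0
        have hsum := hw0S.1
        have hsq := hw0S.2
        rw [hc] at hsum hsq
        simp at hsum hsq
        rcases hsum with h0 | h0
        · simp [h0] at hsq
        · rw [h0] at hsq; simp at hsq
    · intro w hwsum
      by_cases hw0 : ∑ k, (w k)^2 = 0
      · rw [hw0, mul_zero]; exact hGpsd w
      · have hpos : 0 < ∑ k, (w k)^2 :=
          lt_of_le_of_ne (Finset.sum_nonneg fun k _ => sq_nonneg _) (Ne.symm hw0)
        set s : ℝ := Real.sqrt (∑ k, (w k)^2) with hs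
        have hspos : 0 < s := Real.sqrt_pos.mpr hpos
        have hs2 : s^2 = ∑ k, (w k)^2 := Real.sq_sqrt (le_of_lt hpos)
        set w' : Fin N → ℝ := s⁻¹ • w with hw'
        have hw'S : w' ∈ S := by
          constructor
          · simp only [hw', Pi.smul_apply, smul_eq_mul, ← Finset.mul_sum, hwsum, mul_zero]
          · simp only [hw', Pi.smul_apply, smul_eq_mul, mul_pow, ← Finset.mul_sum, ← hs2]
            field_simp
        have hle : w0 ⬝ᵥ G.mulVec w0 ≤ w' ⬝ᵥ G.mulVec w' := hmin hw'S
        have hq' : w' ⬝ᵥ G.mulVec w' = s⁻¹^2 * (w ⬝ᵥ G.mulVec w) := by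
          rw [hw', Matrix.mulVec_smul, smul_dotProduct, dotProduct_smul]
          simp only [smul_eq_mul]; ring
        rw [hq'] at hle
        rw [← hs2]
        have hs2pos : 0 < s^2 := pow_pos hspos 2
        calc (w0 ⬝ᵥ G.mulVec w0) * s^2 ≤ (s⁻¹^2 * (w ⬝ᵥ G.mulVec w)) * s^2 :=
          mul_le_mul_of_nonneg_right hle (le_of_lt hs2pos)
        _ = w ⬝ᵥ G.mulVec w := by field_simp
  · refine ⟨1, one_pos, fun w hwsum => ?_⟩
    by_cases hw0 : ∑ k, (w k)^2 = 0
    · rw [hw0, mul_zero]; exact hGpsd w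
    · exfalso
      have hpos : 0 < ∑ k, (w k)^2 :=
        lt_of_le_of_ne (Finset.sum_nonneg fun k _ => sq_nonneg _) (Ne.symm hw0)
      set s : ℝ := Real.sqrt (∑ k, (w k)^2) with hs
      have hspos : 0 < s := Real.sqrt_pos.mpr hpos
      have hs2 : s^2 = ∑ k, (w k)^2 := Real.sq_sqrt (le_of_lt hpos)
      apply hne
      refine ⟨s⁻¹ • w, ?_, ?_⟩
      · simp only [Pi.smul_apply, smul_eq_mul, ← Finset.mul_sum, hwsum, mul_zero]
      · simp only [Pi.smul_apply, smul_eq_mul, mul_pow, ← Finset.mul_sum, ← hs2]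
        field_simp

lemma assemble' (η α τ lam EG EB θ2 θ3 ψ ε a b c P q1 q2 g h : ℝ)
    (hη : 0 < η) (hα : 0 < α) (hτ : 0 < τ) (hlam : 0 < lam)
    (hθ2 : 4*τ*η*EG*θ2 = 1)
    (hθ3 : 2*EB*θ3 = lam)
    (hε0 : 0 < ε) (hε1 : ε ≤ 2⁻¹)
    (hεD : ε * (τ⁻¹ + η*(EG*(τ*(η*EG))) + η*(EB*ψ) + η*α) ≤ η*α/2)
    (hb : 0 ≤ b) (hc : 0 ≤ c)
    (hq1 : 0 ≤ q1) (hq2 : lam * b ≤ q2)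
    (hP : P ≤ c + 4⁻¹*a)
    (hg : g ≤ EG*(τ*(η*EG)*c + θ2*a))
    (hmh : -h ≤ EB*(ψ*c + θ3*b)) :
    -(η*q1) - η*q2 - η*α*c - ε*(τ⁻¹*(a-P) + (-(η*g) + η*h - η*α*c))
      ≤ -(ε*τ⁻¹*2⁻¹*a) - η*lam*2⁻¹*b - η*α*2⁻¹*c := by
  have hτ' : τ ≠ 0 := ne_of_gt hτ
  have hσ0 : 0 < τ⁻¹ := inv_pos.mpr hτ
  have hσ : τ * τ⁻¹ = 1 := mul_inv_cancel₀ hτ'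
  have h8 : 4*(η*(EG*θ2)) = τ⁻¹ := by
    have key : τ*(4*(η*(EG*θ2))) = τ*τ⁻¹ := by linear_combination hθ2 - hσ
    exact mul_left_cancel₀ hτ' key
  have m1 : ε*(τ⁻¹*P) ≤ ε*(τ⁻¹*(c + 4⁻¹*a)) :=
    mul_le_mul_of_nonneg_left (mul_le_mul_of_nonneg_left hP hσ0.le) hε0.le
  have m2 : ε*(η*g) ≤ ε*(η*(EG*(τ*(η*EG)*c + θ2*a))) :=
    mul_le_mul_of_nonneg_left (mul_le_mul_of_nonneg_left hg hη.le) hε0.le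
  have m3 : ε*(η*(-h)) ≤ ε*(η*(EB*(ψ*c + θ3*b))) :=
    mul_le_mul_of_nonneg_left (mul_le_mul_of_nonneg_left hmh hη.le) hε0.le
  have m4 : η*(lam*b) ≤ η*q2 := mul_le_mul_of_nonneg_left hq2 hη.le
  have m5 : 0 ≤ η*q1 := mul_nonneg hη.le hq1
  have m6 : ε*(τ⁻¹ + η*(EG*(τ*(η*EG))) + η*(EB*ψ) + η*α)*c ≤ (η*α/2)*c :=
    mul_le_mul_of_nonneg_right hεD hc
  have m7 : ε*(η*(EB*θ3))*b ≤ η*lam*2⁻¹*b := by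
    have e : EB*θ3 = lam*2⁻¹ := by linarith
    calc ε*(η*(EB*θ3))*b = ε*(η*lam*2⁻¹*b) := by rw [e]; ring
    _ ≤ 1*(η*lam*2⁻¹*b) := mul_le_mul_of_nonneg_right (by linarith) (by positivity)
    _ = η*lam*2⁻¹*b := one_mul _
  have m8 : ε*(η*(EG*θ2))*a = ε*(τ⁻¹*4⁻¹)*a := by
    linear_combination (ε*a*4⁻¹) * h8
  nlinarith [m1, m2, m3, m4, m5, m6, m7, m8]

lemma hasDeriv_sum_sq' {N : ℕ} (u : ℝ → Fin N → ℝ) (U : Fin N → ℝ) (t : ℝ)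
    (h : ∀ k, HasDerivAt (fun s => u s k) (U k) t) :
    HasDerivAt (fun s => ∑ k, (u s k)^2) (2 * (u t ⬝ᵥ U)) t := by
  have h1 : HasDerivAt (fun s => ∑ k, (u s k)^2) (∑ k : Fin N, 2 * u t k * U k) t := by
    refine HasDerivAt.fun_sum fun k _ => ?_
    have := (h k).fun_pow 2
    simpa using this
  convert h1 using 1
  rw [dotProduct, Finset.mul_sum]
  exact Finset.sum_congr rfl fun k _ => by ring

lemma hasDeriv_sum_mul' {N : ℕ} (u f : ℝ → Fin N → ℝ) (U F : Fin N → ℝ) (t : ℝ)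
    (hu : ∀ k, HasDerivAt (fun s => u s k) (U k) t)
    (hf : ∀ k, HasDerivAt (fun s => f s k) (F k) t) :
    HasDerivAt (fun s => ∑ k, u s k * f s k) (U ⬝ᵥ f t + u t ⬝ᵥ F) t := by
  have h1 : HasDerivAt (fun s => ∑ k, u s k * f s k)
      (∑ k : Fin N, (U k * f t k + u t k * F k)) t :=
    HasDerivAt.fun_sum fun k _ => (hu k).mul (hf k)
  convert h1 using 1
  rw [dotProduct, dotProduct, ← Finset.sum_add_distrib]

end AuxLemmas

set_option maxHeartbeats 1600000 in
/-- Global asymptotic stability of the slow error dynamics: along solutions of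
`ũ' = −ηG'ũ + ηB'δ̃ − ηαũ_f`, `δ̃' = −ηB'ũ − ηG'δ̃`, `τũ_f' = ũ − ũ_f` with `1ᵀδ̃(0) = 0`,
the Lyapunov function `W = ½‖ũ‖² + ½‖δ̃‖² + ½ηατ‖ũ_f‖²` satisfies
`Ẇ = −ηũᵀG'ũ − ηδ̃ᵀG'δ̃ − ηα‖ũ_f‖² ≤ 0`, and the state converges to the origin. -/
theorem slow_error_dynamics_gas {N : ℕ}
    (G B : Matrix (Fin N) (Fin N) ℝ)
    (hGsym : G.IsSymm) (hBsym : B.IsSymm)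
    (hGpsd : ∀ w : Fin N → ℝ, 0 ≤ w ⬝ᵥ G.mulVec w)
    (hker : ∀ w : Fin N → ℝ, G.mulVec w = 0 ↔ ∃ c : ℝ, w = fun _ => c)
    (hB1 : B.mulVec (fun _ => 1) = 0)
    (η α τ : ℝ) (hη : 0 < η) (hα : 0 < α) (hτ : 0 < τ)
    (u d f : ℝ → Fin N → ℝ)
    (hu : ∀ t k, HasDerivAt (fun s => u s k)
      ((-(η • G.mulVec (u t)) + η • B.mulVec (d t) - (η * α) • f t) k) t)
    (hd : ∀ t k, HasDerivAt (fun s => d s k)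
      ((-(η • B.mulVec (u t)) - η • G.mulVec (d t)) k) t)
    (hf : ∀ t k, HasDerivAt (fun s => f s k) ((τ⁻¹ • (u t - f t)) k) t)
    (hδ0 : ∑ k, d 0 k = 0) :
    (∀ t, HasDerivAt
        (fun s => (∑ k, (u s k) ^ 2) / 2 + (∑ k, (d s k) ^ 2) / 2 +
          η * α * τ * (∑ k, (f s k) ^ 2) / 2)
        (-(η * (u t ⬝ᵥ G.mulVec (u t))) - η * (d t ⬝ᵥ G.mulVec (d t)) -
          η * α * (∑ k, (f t k) ^ 2)) t ∧
      -(η * (u t ⬝ᵥ G.mulVec (u t))) - η * (d t ⬝ᵥ G.mulVec (d t)) -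
          η * α * (∑ k, (f t k) ^ 2) ≤ 0) ∧
    Tendsto u atTop (𝓝 0) ∧ Tendsto d atTop (𝓝 0) ∧ Tendsto f atTop (𝓝 0) := by
  classical
  have hτ' : τ ≠ 0 := ne_of_gt hτ
  have hη' : η ≠ 0 := ne_of_gt hη
  obtain ⟨lam, hlam, hgap⟩ := gap' G hGsym hGpsd hker
  have hG1 : G.mulVec (fun _ => 1) = 0 := (hker _).mpr ⟨1, rfl⟩
  -- basic nonnegativity
  have hA0 : ∀ t, (0:ℝ) ≤ ∑ k, (u t k)^2 := fun t => Finset.sum_nonneg fun k _ => sq_nonneg _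
  have hB0 : ∀ t, (0:ℝ) ≤ ∑ k, (d t k)^2 := fun t => Finset.sum_nonneg fun k _ => sq_nonneg _
  have hC0 : ∀ t, (0:ℝ) ≤ ∑ k, (f t k)^2 := fun t => Finset.sum_nonneg fun k _ => sq_nonneg _
  -- the sum of d is conserved and zero
  have hdsum : ∀ t, ∑ k, d t k = 0 := by
    have hS : ∀ t, HasDerivAt (fun s => ∑ k, d s k) 0 t := by
      intro t
      have h := HasDerivAt.fun_sum (u := Finset.univ) fun k _ => hd t k
      refine h.congr_deriv ?_
      have e1 : ∑ k, (-(η • B.mulVec (u t)) - η • G.mulVec (d t)) k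
          = (fun _ => (1:ℝ)) ⬝ᵥ (-(η • B.mulVec (u t)) - η • G.mulVec (d t)) := by
        simp [dotProduct]
      rw [e1, dotProduct_sub, dotProduct_neg, dotProduct_smul, dotProduct_smul,
        dot_symm' B hBsym _ (u t), dot_symm' G hGsym _ (d t), hB1, hG1]
      simp
    have hconst : ∀ t : ℝ, ∑ k, d t k = ∑ k, d 0 k := fun t =>
      is_const_of_deriv_eq_zero (fun x => (hS x).differentiableAt)
        (fun x => (hS x).deriv) t 0
    intro t; rw [hconst t, hδ0]
  -- useful dot product identities
  have hdotu : ∀ t, u t ⬝ᵥ u t = ∑ k, (u t k)^2 := fun t => by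
    simp [dotProduct, sq]
  have hdotf : ∀ t, f t ⬝ᵥ f t = ∑ k, (f t k)^2 := fun t => by
    simp [dotProduct, sq]
  -- derivative of W
  have hW : ∀ t, HasDerivAt
      (fun s => (∑ k, (u s k) ^ 2) / 2 + (∑ k, (d s k) ^ 2) / 2 +
        η * α * τ * (∑ k, (f s k) ^ 2) / 2)
      (-(η * (u t ⬝ᵥ G.mulVec (u t))) - η * (d t ⬝ᵥ G.mulVec (d t)) -
        η * α * (∑ k, (f t k) ^ 2)) t := by
    intro t
    have h1 := (hasDeriv_sum_sq' u _ t (hu t)).div_const 2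
    have h2 := (hasDeriv_sum_sq' d _ t (hd t)).div_const 2
    have h3 := (HasDerivAt.const_mul (η*α*τ) (hasDeriv_sum_sq' f _ t (hf t))).div_const 2
    have H := (h1.add h2).add h3
    refine H.congr_deriv ?_
    have eU : u t ⬝ᵥ (-(η • G.mulVec (u t)) + η • B.mulVec (d t) - (η * α) • f t)
        = -(η * (u t ⬝ᵥ G.mulVec (u t))) + η * (d t ⬝ᵥ B.mulVec (u t))
          - η*α*(u t ⬝ᵥ f t) := by
      rw [dotProduct_sub, dotProduct_add, dotProduct_neg, dotProduct_smul, dotProduct_smul,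
        dotProduct_smul, dot_symm' B hBsym (u t) (d t)]
      simp only [smul_eq_mul]
    have eD : d t ⬝ᵥ (-(η • B.mulVec (u t)) - η • G.mulVec (d t))
        = -(η * (d t ⬝ᵥ B.mulVec (u t))) - η * (d t ⬝ᵥ G.mulVec (d t)) := by
      rw [dotProduct_sub, dotProduct_neg, dotProduct_smul, dotProduct_smul]
      simp [smul_eq_mul]
    have eF : f t ⬝ᵥ (τ⁻¹ • (u t - f t))
        = τ⁻¹ * ((u t ⬝ᵥ f t) - ∑ k, (f t k)^2) := by
      rw [dotProduct_smul, dotProduct_sub, dotProduct_comm (f t) (u t), hdotf]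
      simp [smul_eq_mul]
    rw [eU, eD, eF]
    field_simp
    ring
  -- nonpositivity of Ẇ
  have hWle : ∀ t, -(η * (u t ⬝ᵥ G.mulVec (u t))) - η * (d t ⬝ᵥ G.mulVec (d t)) -
      η * α * (∑ k, (f t k) ^ 2) ≤ 0 := by
    intro t
    have h1 := mul_nonneg hη.le (hGpsd (u t))
    have h2 := mul_nonneg hη.le (hGpsd (d t))
    have h3 := mul_nonneg (mul_nonneg hη.le hα.le) (hC0 t)
    linarith
  refine ⟨fun t => ⟨hW t, hWle t⟩, ?_⟩
  -- constants
  set EG : ℝ := (∑ i, ∑ j, |G i j|) + 1 with hEGdef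
  set EB : ℝ := (∑ i, ∑ j, |B i j|) + 1 with hEBdef
  have hGsum : (0:ℝ) ≤ ∑ i, ∑ j, |G i j| :=
    Finset.sum_nonneg fun i _ => Finset.sum_nonneg fun j _ => abs_nonneg _
  have hBsum : (0:ℝ) ≤ ∑ i, ∑ j, |B i j| :=
    Finset.sum_nonneg fun i _ => Finset.sum_nonneg fun j _ => abs_nonneg _
  have hEG : 0 < EG := by rw [hEGdef]; linarith
  have hEB : 0 < EB := by rw [hEBdef]; linarith
  set θ2 : ℝ := (4*τ*η*EG)⁻¹ with hθ2def
  have hθ2pos : 0 < θ2 := by rw [hθ2def]; positivity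
  have hθ2eq : 4*τ*η*EG*θ2 = 1 := by rw [hθ2def]; field_simp
  set θ3 : ℝ := lam*(2*EB)⁻¹ with hθ3def
  have hθ3pos : 0 < θ3 := by rw [hθ3def]; positivity
  have hθ3eq : 2*EB*θ3 = lam := by rw [hθ3def]; field_simp
  set ψ : ℝ := (4*θ3)⁻¹ with hψdef
  set D : ℝ := τ⁻¹ + η*(EG*(τ*(η*EG))) + η*(EB*ψ) + η*α with hDdef
  have hψpos : 0 < ψ := by rw [hψdef]; positivity
  have hD : 0 < D := by
    rw [hDdef]
    have h1 : 0 < τ⁻¹ := inv_pos.mpr hτ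
    have h2 : 0 < η*(EG*(τ*(η*EG))) := by positivity
    have h3 : 0 < η*(EB*ψ) := by positivity
    have h4 : 0 < η*α := mul_pos hη hα
    linarith
  set ε : ℝ := min 2⁻¹ (min (η*α*τ*2⁻¹) (η*α/(2*D))) with hεdef
  have hε0 : 0 < ε := lt_min (by norm_num)
    (lt_min (by positivity) (div_pos (mul_pos hη hα) (by linarith)))
  have hε1 : ε ≤ 2⁻¹ := min_le_left _ _
  have hε2 : ε ≤ η*α*τ*2⁻¹ := le_trans (min_le_right _ _) (min_le_left _ _)
  have hεD : ε * D ≤ η*α/2 := by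
    calc ε * D ≤ (η*α/(2*D))*D :=
      mul_le_mul_of_nonneg_right (le_trans (min_le_right _ _) (min_le_right _ _)) hD.le
    _ = η*α/2 := by field_simp
  clear_value EG EB θ2 θ3 ψ D ε
  -- the modified Lyapunov function V and its derivative
  set VV : ℝ → ℝ := fun s => (∑ k, (u s k) ^ 2) / 2 + (∑ k, (d s k) ^ 2) / 2 +
      η * α * τ * (∑ k, (f s k) ^ 2) / 2 - ε * ∑ k, u s k * f s k with hVVdef
  set dV : ℝ → ℝ := fun t =>
      (-(η * (u t ⬝ᵥ G.mulVec (u t))) - η * (d t ⬝ᵥ G.mulVec (d t)) -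
        η * α * (∑ k, (f t k) ^ 2)) -
        ε * (τ⁻¹*((∑ k, (u t k)^2) - ∑ k, u t k * f t k) +
          (-(η * (f t ⬝ᵥ G.mulVec (u t))) + η * (f t ⬝ᵥ B.mulVec (d t)) -
            η * α * (∑ k, (f t k)^2))) with hdVdef
  have hV : ∀ t, HasDerivAt VV (dV t) t := by
    intro t
    simp only [hVVdef, hdVdef]
    have hP' := hasDeriv_sum_mul' u f _ _ t (hu t) (hf t)
    have H := (hW t).sub (HasDerivAt.const_mul ε hP')
    refine H.congr_deriv ?_
    have eU' : (-(η • G.mulVec (u t)) + η • B.mulVec (d t) - (η * α) • f t) ⬝ᵥ f t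
        = -(η * (f t ⬝ᵥ G.mulVec (u t))) + η * (f t ⬝ᵥ B.mulVec (d t))
          - η*α*(∑ k, (f t k)^2) := by
      rw [sub_dotProduct, add_dotProduct, neg_dotProduct, smul_dotProduct, smul_dotProduct,
        smul_dotProduct, dotProduct_comm (G.mulVec (u t)) (f t),
        dotProduct_comm (B.mulVec (d t)) (f t), hdotf]
      simp [smul_eq_mul]
    have eF' : u t ⬝ᵥ (τ⁻¹ • (u t - f t))
        = τ⁻¹ * ((∑ k, (u t k)^2) - ∑ k, u t k * f t k) := by
      rw [dotProduct_smul, dotProduct_sub, hdotu]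
      simp [smul_eq_mul, dotProduct]
    rw [eU', eF']
    ring
  -- bound on the derivative of V
  have hdVle : ∀ t, dV t ≤
      -(ε*τ⁻¹*2⁻¹*(∑ k, (u t k)^2)) - η*lam*2⁻¹*(∑ k, (d t k)^2) -
        η*α*2⁻¹*(∑ k, (f t k)^2) := by
    intro t
    simp only [hdVdef]
    have hq2 := hgap (d t) (hdsum t)
    have hP : (∑ k, u t k * f t k) ≤ (∑ k, (f t k)^2) + 4⁻¹*(∑ k, (u t k)^2) := by
      have key : ∀ k : Fin N, u t k * f t k ≤ (f t k)^2 + 4⁻¹*(u t k)^2 := by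
        intro k
        have := young' (f t k) (u t k) 1 one_pos
        calc u t k * f t k = f t k * u t k := by ring
        _ ≤ 1 * (f t k)^2 + (4*1)⁻¹ * (u t k)^2 := this
        _ = (f t k)^2 + 4⁻¹*(u t k)^2 := by norm_num
      calc (∑ k, u t k * f t k) ≤ ∑ k, ((f t k)^2 + 4⁻¹*(u t k)^2) :=
        Finset.sum_le_sum fun k _ => key k
      _ = (∑ k, (f t k)^2) + 4⁻¹*(∑ k, (u t k)^2) := by
        rw [Finset.sum_add_distrib, ← Finset.mul_sum]
    have h4θ2 : (4*θ2)⁻¹ = τ*(η*EG) := by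
      rw [hθ2def]
      rw [show (4:ℝ)*(4*τ*η*EG)⁻¹ = (τ*(η*EG))⁻¹ by
        field_simp]
      rw [inv_inv]
    have hg : f t ⬝ᵥ G.mulVec (u t) ≤ EG*(τ*(η*EG)*(∑ k, (f t k)^2) + θ2*(∑ k, (u t k)^2)) := by
      have raw := dot_mulVec_le' G (f t) (u t) θ2 hθ2pos
      have hbr : (0:ℝ) ≤ (4*θ2)⁻¹ * (∑ i, (f t i)^2) + θ2 * (∑ j, (u t j)^2) := by
        have h3 : (0:ℝ) ≤ (4*θ2)⁻¹ := inv_nonneg.mpr (by linarith)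
        exact add_nonneg (mul_nonneg h3 (hC0 t)) (mul_nonneg hθ2pos.le (hA0 t))
      have henl : (∑ i, ∑ j, |G i j|) * ((4*θ2)⁻¹ * (∑ i, (f t i)^2) + θ2 * (∑ j, (u t j)^2))
          ≤ EG * ((4*θ2)⁻¹ * (∑ i, (f t i)^2) + θ2 * (∑ j, (u t j)^2)) :=
        mul_le_mul_of_nonneg_right (by rw [hEGdef]; linarith) hbr
      calc f t ⬝ᵥ G.mulVec (u t) ≤ _ := le_trans raw henl
      _ = EG*(τ*(η*EG)*(∑ k, (f t k)^2) + θ2*(∑ k, (u t k)^2)) := by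
        rw [h4θ2]
    have hmh : -(f t ⬝ᵥ B.mulVec (d t)) ≤ EB*(ψ*(∑ k, (f t k)^2) + θ3*(∑ k, (d t k)^2)) := by
      have raw := dot_mulVec_le' B (-(f t)) (d t) θ3 hθ3pos
      have hneg : (-(f t)) ⬝ᵥ B.mulVec (d t) = -(f t ⬝ᵥ B.mulVec (d t)) := neg_dotProduct _ _
      have hneg2 : (∑ i, ((-(f t)) i)^2) = ∑ i, (f t i)^2 := by simp
      rw [hneg, hneg2] at raw
      have hbr : (0:ℝ) ≤ (4*θ3)⁻¹ * (∑ i, (f t i)^2) + θ3 * (∑ j, (d t j)^2) := by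
        have h3 : (0:ℝ) ≤ (4*θ3)⁻¹ := inv_nonneg.mpr (by linarith)
        exact add_nonneg (mul_nonneg h3 (hC0 t)) (mul_nonneg hθ3pos.le (hB0 t))
      have henl : (∑ i, ∑ j, |B i j|) * ((4*θ3)⁻¹ * (∑ i, (f t i)^2) + θ3 * (∑ j, (d t j)^2))
          ≤ EB * ((4*θ3)⁻¹ * (∑ i, (f t i)^2) + θ3 * (∑ j, (d t j)^2)) :=
        mul_le_mul_of_nonneg_right (by rw [hEBdef]; linarith) hbr
      calc -(f t ⬝ᵥ B.mulVec (d t)) ≤ _ := le_trans raw henl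
      _ = EB*(ψ*(∑ k, (f t k)^2) + θ3*(∑ k, (d t k)^2)) := by
        rw [hψdef]
    have hεD' : ε * (τ⁻¹ + η*(EG*(τ*(η*EG))) + η*(EB*ψ) + η*α) ≤ η*α/2 := by
      rw [← hDdef]; exact hεD
    exact assemble' η α τ lam EG EB θ2 θ3 ψ ε
      (∑ k, (u t k)^2) (∑ k, (d t k)^2) (∑ k, (f t k)^2) (∑ k, u t k * f t k)
      (u t ⬝ᵥ G.mulVec (u t)) (d t ⬝ᵥ G.mulVec (d t))
      (f t ⬝ᵥ G.mulVec (u t)) (f t ⬝ᵥ B.mulVec (d t))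
      hη hα hτ hlam hθ2eq hθ3eq hε0 hε1 hεD' (hB0 t) (hC0 t)
      (hGpsd (u t)) hq2 hP hg hmh
  -- pointwise bounds on V
  have hηατ : (0:ℝ) < η*α*τ := mul_pos (mul_pos hη hα) hτ
  have hPup : ∀ t, (∑ k, u t k * f t k)
      ≤ ((∑ k, (u t k)^2) + (∑ k, (f t k)^2))/2 := by
    intro t
    have key : ∀ k : Fin N, u t k * f t k ≤ ((u t k)^2 + (f t k)^2)/2 := fun k => by
      nlinarith [sq_nonneg (u t k - f t k)]
    calc (∑ k, u t k * f t k) ≤ ∑ k, ((u t k)^2 + (f t k)^2)/2 :=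
      Finset.sum_le_sum fun k _ => key k
    _ = ((∑ k, (u t k)^2) + (∑ k, (f t k)^2))/2 := by
      rw [← Finset.sum_div, Finset.sum_add_distrib]
  have hPlo : ∀ t, -(((∑ k, (u t k)^2) + (∑ k, (f t k)^2))/2)
      ≤ ∑ k, u t k * f t k := by
    intro t
    have key : ∀ k : Fin N, -(((u t k)^2 + (f t k)^2)/2) ≤ u t k * f t k := fun k => by
      nlinarith [sq_nonneg (u t k + f t k)]
    have e : ∑ k, -(((u t k)^2 + (f t k)^2)/2)
        = -(((∑ k, (u t k)^2) + (∑ k, (f t k)^2))/2) := by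
      rw [Finset.sum_neg_distrib, ← Finset.sum_div, Finset.sum_add_distrib]
    calc -(((∑ k, (u t k)^2) + (∑ k, (f t k)^2))/2)
        = ∑ k, -(((u t k)^2 + (f t k)^2)/2) := e.symm
    _ ≤ ∑ k, u t k * f t k := Finset.sum_le_sum fun k _ => key k
  set Lam : ℝ := 1 + η*α*τ with hLamdef
  have hLam0 : 0 < Lam := by rw [hLamdef]; linarith
  have hVup : ∀ t, VV t ≤ Lam * ((∑ k, (u t k)^2) + (∑ k, (d t k)^2) + (∑ k, (f t k)^2)) := by
    intro t
    simp only [hVVdef, hLamdef]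
    have hεP := mul_le_mul_of_nonneg_left (hPlo t) hε0.le
    have c1 : ε*(∑ k, (u t k)^2) ≤ 2⁻¹*(∑ k, (u t k)^2) :=
      mul_le_mul_of_nonneg_right hε1 (hA0 t)
    have c2 : ε*(∑ k, (f t k)^2) ≤ 2⁻¹*(∑ k, (f t k)^2) :=
      mul_le_mul_of_nonneg_right hε1 (hC0 t)
    have n1 := mul_nonneg hηατ.le (hA0 t)
    have n2 := mul_nonneg hηατ.le (hB0 t)
    have n3 := mul_nonneg hηατ.le (hC0 t)
    have ha := hA0 t; have hb := hB0 t; have hc := hC0 t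
    nlinarith [hεP, c1, c2, n1, n2, n3]
  have hVgeA : ∀ t, (∑ k, (u t k)^2) ≤ 4*VV t := by
    intro t
    simp only [hVVdef]
    have hεP := mul_le_mul_of_nonneg_left (hPup t) hε0.le
    have c1 : ε*(∑ k, (u t k)^2) ≤ 2⁻¹*(∑ k, (u t k)^2) :=
      mul_le_mul_of_nonneg_right hε1 (hA0 t)
    have c2 : ε*(∑ k, (f t k)^2) ≤ η*α*τ*2⁻¹*(∑ k, (f t k)^2) :=
      mul_le_mul_of_nonneg_right hε2 (hC0 t)
    have n3 := mul_nonneg hηατ.le (hC0 t)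
    have ha := hA0 t; have hb := hB0 t; have hc := hC0 t
    nlinarith [hεP, c1, c2, n3]
  have hVgeB : ∀ t, (∑ k, (d t k)^2) ≤ 2*VV t := by
    intro t
    simp only [hVVdef]
    have hεP := mul_le_mul_of_nonneg_left (hPup t) hε0.le
    have c1 : ε*(∑ k, (u t k)^2) ≤ 2⁻¹*(∑ k, (u t k)^2) :=
      mul_le_mul_of_nonneg_right hε1 (hA0 t)
    have c2 : ε*(∑ k, (f t k)^2) ≤ η*α*τ*2⁻¹*(∑ k, (f t k)^2) :=
      mul_le_mul_of_nonneg_right hε2 (hC0 t)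
    have n3 := mul_nonneg hηατ.le (hC0 t)
    have ha := hA0 t; have hb := hB0 t; have hc := hC0 t
    nlinarith [hεP, c1, c2, n3]
  have hVgeC : ∀ t, η*α*τ*(∑ k, (f t k)^2) ≤ 4*VV t := by
    intro t
    simp only [hVVdef]
    have hεP := mul_le_mul_of_nonneg_left (hPup t) hε0.le
    have c1 : ε*(∑ k, (u t k)^2) ≤ 2⁻¹*(∑ k, (u t k)^2) :=
      mul_le_mul_of_nonneg_right hε1 (hA0 t)
    have c2 : ε*(∑ k, (f t k)^2) ≤ η*α*τ*2⁻¹*(∑ k, (f t k)^2) :=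
      mul_le_mul_of_nonneg_right hε2 (hC0 t)
    have n3 := mul_nonneg hηατ.le (hC0 t)
    have ha := hA0 t; have hb := hB0 t; have hc := hC0 t
    nlinarith [hεP, c1, c2, n3]
  clear_value VV dV Lam
  -- decay rate
  set κ : ℝ := min (ε*τ⁻¹*2⁻¹) (min (η*lam*2⁻¹) (η*α*2⁻¹)) with hκdef
  have hτi : (0:ℝ) < τ⁻¹ := inv_pos.mpr hτ
  have hκ : 0 < κ := lt_min (by positivity) (lt_min (by positivity) (by positivity))
  have hκ1 : κ ≤ ε*τ⁻¹*2⁻¹ := min_le_left _ _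
  have hκ2 : κ ≤ η*lam*2⁻¹ := le_trans (min_le_right _ _) (min_le_left _ _)
  have hκ3 : κ ≤ η*α*2⁻¹ := le_trans (min_le_right _ _) (min_le_right _ _)
  clear_value κ
  have hdVκ : ∀ t, dV t ≤ -κ*((∑ k, (u t k)^2) + (∑ k, (d t k)^2) + (∑ k, (f t k)^2)) := by
    intro t
    have h := hdVle t
    have p1 := mul_le_mul_of_nonneg_right hκ1 (hA0 t)
    have p2 := mul_le_mul_of_nonneg_right hκ2 (hB0 t)
    have p3 := mul_le_mul_of_nonneg_right hκ3 (hC0 t)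
    linarith
  set ρ : ℝ := κ/Lam with hρdef
  have hρ : 0 < ρ := div_pos hκ hLam0
  have hρΛ : ρ*Lam = κ := div_mul_cancel₀ _ (ne_of_gt hLam0)
  clear_value ρ
  have hVρ : ∀ t, dV t + ρ*(VV t) ≤ 0 := by
    intro t
    have h2 : ρ*(VV t) ≤ ρ*(Lam*((∑ k, (u t k)^2) + (∑ k, (d t k)^2) + (∑ k, (f t k)^2))) :=
      mul_le_mul_of_nonneg_left (hVup t) hρ.le
    have h3 : ρ*(Lam*((∑ k, (u t k)^2) + (∑ k, (d t k)^2) + (∑ k, (f t k)^2)))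
        = κ*((∑ k, (u t k)^2) + (∑ k, (d t k)^2) + (∑ k, (f t k)^2)) := by
      rw [← mul_assoc, hρΛ]
    have h4 := hdVκ t
    linarith
  -- Gronwall via monotonicity
  have hΦd : ∀ t, HasDerivAt (fun s => VV s * Real.exp (ρ*s))
      ((dV t + ρ*(VV t)) * Real.exp (ρ*t)) t := by
    intro t
    have hexp : HasDerivAt (fun s : ℝ => Real.exp (ρ*s)) (Real.exp (ρ*t)*ρ) t := by
      have h := ((hasDerivAt_id t).const_mul ρ).exp
      simpa using h
    have H := (hV t).mul hexp
    refine H.congr_deriv ?_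
    ring
  have hanti : Antitone (fun s => VV s * Real.exp (ρ*s)) :=
    antitone_of_deriv_nonpos (fun x => (hΦd x).differentiableAt)
      (fun x => by
        rw [(hΦd x).deriv]
        exact mul_nonpos_of_nonpos_of_nonneg (hVρ x) (Real.exp_nonneg _))
  have hdecay : ∀ t : ℝ, 0 ≤ t → VV t ≤ VV 0 * Real.exp (-(ρ*t)) := by
    intro t ht
    have h1 : VV t * Real.exp (ρ*t) ≤ VV 0 * Real.exp (ρ*0) := hanti ht
    have h2 := mul_le_mul_of_nonneg_right h1 (Real.exp_nonneg (-(ρ*t)))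
    calc VV t = VV t * (Real.exp (ρ*t) * Real.exp (-(ρ*t))) := by
          rw [← Real.exp_add]; simp
    _ = VV t * Real.exp (ρ*t) * Real.exp (-(ρ*t)) := by ring
    _ ≤ VV 0 * Real.exp (ρ*0) * Real.exp (-(ρ*t)) := h2
    _ = VV 0 * Real.exp (-(ρ*t)) := by simp
  have hexp_t : Tendsto (fun t : ℝ => Real.exp (-(ρ*t))) atTop (𝓝 0) := by
    have h1 : Tendsto (fun t : ℝ => ρ*t) atTop atTop :=
      Tendsto.const_mul_atTop hρ tendsto_id
    have h2 : Tendsto (fun t : ℝ => Real.exp (-(ρ*t))) atTop (𝓝 0) :=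
      Real.tendsto_exp_neg_atTop_nhds_zero.comp h1
    exact h2
  -- convergence of the sums of squares
  have hAto : Tendsto (fun t => ∑ k, (u t k)^2) atTop (𝓝 0) := by
    refine squeeze_zero' (g := fun t => (4*VV 0) * Real.exp (-(ρ*t))) (Eventually.of_forall fun t => hA0 t) ?_ ?_
    · filter_upwards [eventually_ge_atTop (0:ℝ)] with t ht
      calc (∑ k, (u t k)^2) ≤ 4*VV t := hVgeA t
      _ ≤ 4*(VV 0 * Real.exp (-(ρ*t))) := by
        have := hdecay t ht; linarith
      _ = (4*VV 0) * Real.exp (-(ρ*t)) := by ring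
    · simpa using hexp_t.const_mul (4*VV 0)
  have hBto : Tendsto (fun t => ∑ k, (d t k)^2) atTop (𝓝 0) := by
    refine squeeze_zero' (g := fun t => (2*VV 0) * Real.exp (-(ρ*t))) (Eventually.of_forall fun t => hB0 t) ?_ ?_
    · filter_upwards [eventually_ge_atTop (0:ℝ)] with t ht
      calc (∑ k, (d t k)^2) ≤ 2*VV t := hVgeB t
      _ ≤ 2*(VV 0 * Real.exp (-(ρ*t))) := by
        have := hdecay t ht; linarith
      _ = (2*VV 0) * Real.exp (-(ρ*t)) := by ring
    · simpa using hexp_t.const_mul (2*VV 0)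
  have hCto : Tendsto (fun t => ∑ k, (f t k)^2) atTop (𝓝 0) := by
    refine squeeze_zero' (g := fun t => ((η*α*τ)⁻¹*(4*VV 0)) * Real.exp (-(ρ*t))) (Eventually.of_forall fun t => hC0 t) ?_ ?_
    · filter_upwards [eventually_ge_atTop (0:ℝ)] with t ht
      have h1 : η*α*τ*(∑ k, (f t k)^2) ≤ 4*VV t := hVgeC t
      have h2 : VV t ≤ VV 0 * Real.exp (-(ρ*t)) := hdecay t ht
      have h3 : η*α*τ*(∑ k, (f t k)^2) ≤ 4*(VV 0 * Real.exp (-(ρ*t))) := by linarith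
      have h4 := mul_le_mul_of_nonneg_left h3 (inv_nonneg.mpr hηατ.le)
      have e : (η*α*τ)⁻¹*(η*α*τ*(∑ k, (f t k)^2)) = ∑ k, (f t k)^2 := by
        field_simp
      calc (∑ k, (f t k)^2) = (η*α*τ)⁻¹*(η*α*τ*(∑ k, (f t k)^2)) := e.symm
      _ ≤ (η*α*τ)⁻¹*(4*(VV 0 * Real.exp (-(ρ*t)))) := h4
      _ = ((η*α*τ)⁻¹*(4*VV 0)) * Real.exp (-(ρ*t)) := by ring
    · simpa using hexp_t.const_mul ((η*α*τ)⁻¹*(4*VV 0))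
  -- coordinatewise convergence
  have coord : ∀ (g : ℝ → Fin N → ℝ),
      Tendsto (fun t => ∑ k, (g t k)^2) atTop (𝓝 0) → Tendsto g atTop (𝓝 0) := by
    intro g hg
    rw [tendsto_pi_nhds]
    intro k
    have hsq : Tendsto (fun t => (g t k)^2) atTop (𝓝 0) :=
      squeeze_zero' (Eventually.of_forall fun t => sq_nonneg _)
        (Eventually.of_forall fun t =>
          Finset.single_le_sum (f := fun k' => (g t k')^2)
            (fun _ _ => sq_nonneg _) (Finset.mem_univ k)) hg
    have habs : Tendsto (fun t => |g t k|) atTop (𝓝 0) := by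
      have h : Tendsto (fun t => Real.sqrt ((g t k)^2)) atTop (𝓝 (Real.sqrt 0)) :=
        (Real.continuous_sqrt.tendsto 0).comp hsq
      rw [Real.sqrt_zero] at h
      simp only [Real.sqrt_sq_eq_abs] at h
      exact h
    have hneg : Tendsto (fun t => -|g t k|) atTop (𝓝 0) := by
      simpa using habs.neg
    have := tendsto_of_tendsto_of_tendsto_of_le_of_le hneg habs
      (fun t => neg_abs_le _) (fun t => le_abs_self _)
    simpa using this
  exact ⟨coord u hAto, coord d hBto, coord f hCto⟩
end

section
/- For the system ũ' = −ηG'ũ + ηB'δ̃ − ηαũ_f, δ̃' = −ηB'ũ − ηG'δ̃, τũ_f' = ũ − ũ_f (with hypotheses as above), the set {(ũ, δ̃, ũ_f) : G'ũ = 0, G'δ̃ = 0, ũ_f = 0, 1ᵀδ̃ = 0} intersected with its forward-invariant subset under the flow equals {0}. That is: if a solution stays for all time in {Ẇ = 0} = {ũ ∈ ker G', δ̃ ∈ ker G', ũ_f = 0} with 1ᵀδ̃(t) = 0, then ũ = δ̃ = ũ_f = 0. -/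
open Matrix Finset

/-- LaSalle invariant-set computation: a solution of the slow error dynamics that remains in
`{G'ũ = 0, G'δ̃ = 0, ũ_f = 0}` with `1ᵀδ̃ = 0` for all time must be identically zero. -/
theorem lasalle_invariant_set_is_origin {N : ℕ}
    (G B : Matrix (Fin N) (Fin N) ℝ)
    (hGsym : G.IsSymm) (hBsym : B.IsSymm)
    (hGpsd : ∀ w : Fin N → ℝ, 0 ≤ w ⬝ᵥ G.mulVec w)
    (hker : ∀ w : Fin N → ℝ, G.mulVec w = 0 ↔ ∃ c : ℝ, w = fun _ => c)
    (hB1 : B.mulVec (fun _ => 1) = 0)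
    (η α τ : ℝ) (hη : 0 < η) (hα : 0 < α) (hτ : 0 < τ)
    (u d f : ℝ → Fin N → ℝ)
    (hu : ∀ t k, HasDerivAt (fun s => u s k)
      ((-(η • G.mulVec (u t)) + η • B.mulVec (d t) - (η * α) • f t) k) t)
    (hd : ∀ t k, HasDerivAt (fun s => d s k)
      ((-(η • B.mulVec (u t)) - η • G.mulVec (d t)) k) t)
    (hf : ∀ t k, HasDerivAt (fun s => f s k) ((τ⁻¹ • (u t - f t)) k) t)
    (hstay : ∀ t, G.mulVec (u t) = 0 ∧ G.mulVec (d t) = 0 ∧ f t = 0 ∧ ∑ k, d t k = 0) :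
    ∀ t, u t = 0 ∧ d t = 0 ∧ f t = 0 := by
  intro t
  obtain ⟨hGu, hGd, hf0, hsum⟩ := hstay t
  have hu0 : u t = 0 := by
    funext k
    have h1 := hf t k
    have h2 : HasDerivAt (fun s => f s k) 0 t := by
      have : (fun s => f s k) = fun _ => 0 := by
        funext s; rw [(hstay s).2.2.1]; rfl
      rw [this]; exact hasDerivAt_const t 0
    have := h1.unique h2
    simp only [Pi.smul_apply, Pi.sub_apply, hf0, Pi.zero_apply, sub_zero,
      smul_eq_mul] at this
    have hτ' : τ⁻¹ ≠ 0 := inv_ne_zero hτ.ne'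
    exact (mul_eq_zero.mp this).resolve_left hτ'
  refine ⟨hu0, ?_, hf0⟩
  obtain ⟨c, hc⟩ := (hker (d t)).mp hGd
  funext k
  have : (N : ℝ) * c = 0 := by
    rw [← hsum, hc]; simp [mul_comm]
  have hN : (N : ℝ) ≠ 0 := by
    have : 0 < N := k.pos
    exact_mod_cast this.ne'
  have hc0 : c = 0 := by
    rcases mul_eq_zero.mp this with h | h
    · exact absurd h hN
    · exact h
  rw [hc, hc0]; rfl
end
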